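/- arXiv:1610.05637 — 7 statements merged into one kernel-verified Lean document; each statement's English description precedes it below -/
import Mathlib

section
/- Let 1<p<5, |d|<1, and y in the closed unit ball of \mathbb{R}^2 with 1+d\cdot y>0 (where d is a vector of norm <1). Then the function \kappa(d,y) = \kappa_0 (1-|d|^2)^{1/(p-1)} / (1+ d\cdot y)^{2/(p-1)}, with \kappa_0 = (2(p+1)/(p-1)^2)^{1/(p-1)}, satisfies the stationary equation \mathcal{L}\kappa - (2(p+1)/(p-1)^2)\kappa + \kappa^p = 0, where \mathcal{L}w = \rho^{-1}\,\mathrm{div}(\rho\nabla w - \rho (y\cdot\nabla w)y) and \rho(y) = (1-|y|^2)^{(5-p)/(2(p-1))}. -/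
open MeasureTheory

noncomputable def divg (F : EuclideanSpace ℝ (Fin 2) → EuclideanSpace ℝ (Fin 2))
    (y : EuclideanSpace ℝ (Fin 2)) : ℝ :=
  ∑ i : Fin 2, fderiv ℝ F y (EuclideanSpace.single i 1) i

section Aux
open Real
local notation "EE" => EuclideanSpace ℝ (Fin 2)

lemma aux_normsq (y : EE) :
    HasFDerivAt (fun z : EE => ‖z‖ ^ 2) ((2:ℝ) • (innerSL ℝ y)) y := by
  have h := (hasFDerivAt_id y).inner ℝ (hasFDerivAt_id y)
  simp only [id_eq] at h
  have he : (fun z : EE => (inner ℝ z z : ℝ)) = fun z : EE => ‖z‖ ^ 2 := by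
    funext z; exact real_inner_self_eq_norm_sq z
  rw [he] at h
  refine h.congr_fderiv ?_
  ext v
  simp only [ContinuousLinearMap.smul_apply, innerSL_apply_apply, ContinuousLinearMap.comp_apply,
    ContinuousLinearMap.prod_apply, ContinuousLinearMap.id_apply, fderivInnerCLM_apply,
    smul_eq_mul]
  rw [real_inner_comm]; ring

lemma aux_grad (d : EE) (C β : ℝ) (z : EE) (ht : 0 < 1 + (inner ℝ d z : ℝ)) :
    HasGradientAt (fun w : EE => C * (1 + (inner ℝ d w : ℝ)) ^ (-β))
      ((C * -β * (1 + (inner ℝ d z : ℝ)) ^ (-β - 1)) • d) z := by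
  have h1 : HasFDerivAt (fun w : EE => 1 + (inner ℝ d w : ℝ)) (innerSL ℝ d) z := by
    simpa using ((innerSL ℝ d).hasFDerivAt (x := z)).const_add 1
  have h2 := (h1.rpow_const (p := -β) (Or.inl ht.ne')).const_mul C
  rw [hasGradientAt_iff_hasFDerivAt]
  refine h2.congr_fderiv ?_
  ext v
  simp only [InnerProductSpace.toDual_apply_apply, ContinuousLinearMap.smul_apply, innerSL_apply_apply,
    smul_eq_mul, real_inner_smul_left]
  ring

lemma aux_clm_sum (a : EE →L[ℝ] ℝ) (u : EE) :
    a (EuclideanSpace.single 0 1) * u 0 + a (EuclideanSpace.single 1 1) * u 1 = a u := by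
  have hu : u = u 0 • EuclideanSpace.single (0 : Fin 2) (1:ℝ)
      + u 1 • EuclideanSpace.single (1 : Fin 2) (1:ℝ) := by
    ext j; fin_cases j <;> simp [EuclideanSpace.single_apply]
  conv_rhs => rw [hu]
  simp [mul_comm]

lemma aux_divg_L (a b : EE →L[ℝ] ℝ) (c : ℝ) (u v : EE) :
    ∑ i : Fin 2, ((a.smulRight u + (c • ContinuousLinearMap.id ℝ EE + b.smulRight v))
      (EuclideanSpace.single i 1)) i = a u + b v + 2 * c := by
  simp only [Fin.sum_univ_two, ContinuousLinearMap.add_apply,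
    ContinuousLinearMap.smulRight_apply, ContinuousLinearMap.smul_apply,
    ContinuousLinearMap.id_apply, PiLp.add_apply, PiLp.smul_apply, smul_eq_mul]
  rw [← aux_clm_sum a u, ← aux_clm_sum b v]
  simp [EuclideanSpace.single_apply]
  ring

lemma aux_final (p α β C S NN DD M T : ℝ) (hp1 : 1 < p)
    (hβ : β = 2 / (p - 1)) (hα : α = (5 - p) / (2 * (p - 1)))
    (ht : (0:ℝ) < 1 + S) (hm : (0:ℝ) < 1 - NN) (hM : (0:ℝ) < M) :
    M⁻¹ * (M * (C * -β * ((-β - 1) * (T / (1 + S) / (1 + S)) * DD)) +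
        C * -β * (T / (1 + S)) * (α * (M / (1 - NN)) * -(2 * S)) +
        -(M * (C * -β * (T / (1 + S))) * S +
          S * (M * (C * -β * ((-β - 1) * (T / (1 + S) / (1 + S)) * S)) +
            C * -β * (T / (1 + S)) * (α * (M / (1 - NN)) * -(2 * NN)))) +
        2 * -(M * (C * -β * (T / (1 + S))) * S)) -
      2 * (p + 1) / (p - 1) ^ 2 * (C * T) +
      2 * (p + 1) / (p - 1) ^ 2 * (1 - DD) * C * (T / (1 + S) / (1 + S)) = 0 := by
  have hp' : p - 1 ≠ 0 := sub_ne_zero.mpr hp1.ne'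
  subst hβ hα
  field_simp
  ring

end Aux

set_option maxHeartbeats 2000000 in
theorem stmt_2 (p : ℝ) (hp1 : 1 < p) (hp2 : p < 5)
    (d : EuclideanSpace ℝ (Fin 2)) (hd : ‖d‖ < 1)
    (α : ℝ) (hα : α = (5 - p) / (2 * (p - 1)))
    (ρ : EuclideanSpace ℝ (Fin 2) → ℝ)
    (hρ : ∀ y, ρ y = (1 - ‖y‖ ^ 2) ^ α)
    (κ₀ : ℝ) (hκ₀ : κ₀ = (2 * (p + 1) / (p - 1) ^ 2) ^ (1 / (p - 1)))
    (κ : EuclideanSpace ℝ (Fin 2) → ℝ)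
    (hκ : ∀ y, κ y = κ₀ * (1 - ‖d‖ ^ 2) ^ (1 / (p - 1)) / (1 + (inner ℝ d y : ℝ)) ^ (2 / (p - 1))) :
    ∀ y ∈ Metric.ball (0 : EuclideanSpace ℝ (Fin 2)) 1, 0 < 1 + (inner ℝ d y : ℝ) →
      (ρ y)⁻¹ *
          divg (fun z => ρ z • gradient κ z - (ρ z * (inner ℝ z (gradient κ z) : ℝ)) • z) y
        - (2 * (p + 1) / (p - 1) ^ 2) * κ y + (κ y) ^ p = 0 := by
  intro y hy hty
  have hy1 : ‖y‖ < 1 := by simpa [Metric.mem_ball] using hy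
  set C : ℝ := κ₀ * (1 - ‖d‖ ^ 2) ^ (1 / (p - 1)) with hC
  set β : ℝ := 2 / (p - 1) with hβ
  set U : Set (EuclideanSpace ℝ (Fin 2)) := {z | 0 < 1 + (inner ℝ d z : ℝ)} with hUdef
  have hUopen : IsOpen U := by
    have : Continuous fun z : EuclideanSpace ℝ (Fin 2) => 1 + (inner ℝ d z : ℝ) :=
      continuous_const.add (innerSL ℝ d).continuous
    exact isOpen_lt continuous_const this
  have hyU : y ∈ U := hty
  set g : EuclideanSpace ℝ (Fin 2) → ℝ :=
    fun z => C * -β * (1 + (inner ℝ d z : ℝ)) ^ (-β - 1) with hg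
  -- κ agrees with the rpow form on U
  have hκU : ∀ z ∈ U, κ z = C * (1 + (inner ℝ d z : ℝ)) ^ (-β) := by
    intro z hz
    rw [hκ z, Real.rpow_neg (le_of_lt hz), div_eq_mul_inv]
  have hgrad : ∀ z ∈ U, gradient κ z = g z • d := by
    intro z hz
    have hev : κ =ᶠ[nhds z] fun w => C * (1 + (inner ℝ d w : ℝ)) ^ (-β) :=
      Filter.eventually_of_mem (hUopen.mem_nhds hz) (fun w hw => hκU w hw)
    rw [hev.gradient_eq, (aux_grad d C β z hz).gradient]
  -- local scalar functions
  set A : EuclideanSpace ℝ (Fin 2) → ℝ := fun z => ρ z * g z with hA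
  set B : EuclideanSpace ℝ (Fin 2) → ℝ := fun z => -(A z * (inner ℝ d z : ℝ)) with hB
  have hFG : (fun z => ρ z • gradient κ z - (ρ z * (inner ℝ z (gradient κ z) : ℝ)) • z)
      =ᶠ[nhds y] fun z => A z • d + B z • z := by
    refine Filter.eventually_of_mem (hUopen.mem_nhds hyU) (fun z hz => ?_)
    dsimp only
    rw [hgrad z hz]
    simp only [real_inner_smul_right, smul_smul, hA, hB]
    rw [real_inner_comm z d, sub_eq_add_neg, ← neg_smul]
    ring_nf
  -- derivatives at y
  have hm : (0:ℝ) < 1 - ‖y‖ ^ 2 := by nlinarith [norm_nonneg y]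
  have hρdiff : HasFDerivAt ρ
      ((α * (1 - ‖y‖ ^ 2) ^ (α - 1)) • (-((2:ℝ) • innerSL ℝ y))) y := by
    have h1 : HasFDerivAt (fun z : EuclideanSpace ℝ (Fin 2) => 1 - ‖z‖ ^ 2)
        (-((2:ℝ) • innerSL ℝ y)) y := (aux_normsq y).const_sub 1
    have h2 := h1.rpow_const (p := α) (Or.inl hm.ne')
    have : ρ = fun z : EuclideanSpace ℝ (Fin 2) => (1 - ‖z‖ ^ 2) ^ α := funext hρ
    rw [this]; exact h2
  have hgdiff : HasFDerivAt g
      ((C * -β) • (((-β - 1) * (1 + (inner ℝ d y : ℝ)) ^ (-β - 1 - 1)) • innerSL ℝ d)) y := by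
    have h1 : HasFDerivAt (fun w : EuclideanSpace ℝ (Fin 2) => 1 + (inner ℝ d w : ℝ))
        (innerSL ℝ d) y := by
      simpa using ((innerSL ℝ d).hasFDerivAt (x := y)).const_add 1
    exact (h1.rpow_const (p := -β - 1) (Or.inl hty.ne')).const_mul (C * -β)
  set A' := ρ y • ((C * -β) • (((-β - 1) * (1 + (inner ℝ d y : ℝ)) ^ (-β - 1 - 1)) • innerSL ℝ d))
      + g y • ((α * (1 - ‖y‖ ^ 2) ^ (α - 1)) • (-((2:ℝ) • innerSL ℝ y))) with hA'
  have hAdiff : HasFDerivAt A A' y := hρdiff.mul hgdiff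
  set B' := -(A y • innerSL ℝ d + (inner ℝ d y : ℝ) • A') with hB'
  have hBdiff : HasFDerivAt B B' y := by
    have hs : HasFDerivAt (fun z : EuclideanSpace ℝ (Fin 2) => (inner ℝ d z : ℝ))
        (innerSL ℝ d) y := (innerSL ℝ d).hasFDerivAt
    exact (hAdiff.mul hs).neg
  have hGdiff : HasFDerivAt (fun z => A z • d + B z • z)
      (A'.smulRight d + (B y • ContinuousLinearMap.id ℝ (EuclideanSpace ℝ (Fin 2))
        + B'.smulRight y)) y := by
    exact (hAdiff.smul_const d).add (hBdiff.smul (hasFDerivAt_id y))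
  have hFdiff : HasFDerivAt
      (fun z => ρ z • gradient κ z - (ρ z * (inner ℝ z (gradient κ z) : ℝ)) • z)
      (A'.smulRight d + (B y • ContinuousLinearMap.id ℝ (EuclideanSpace ℝ (Fin 2))
        + B'.smulRight y)) y := hGdiff.congr_of_eventuallyEq hFG
  have hdivg : divg (fun z => ρ z • gradient κ z - (ρ z * (inner ℝ z (gradient κ z) : ℝ)) • z) y
      = A' d + B' y + 2 * B y := by
    rw [divg, hFdiff.fderiv]
    exact aux_divg_L A' B' (B y) d y
  rw [hdivg]
  simp only [hA', hB', ContinuousLinearMap.add_apply, ContinuousLinearMap.smul_apply,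
    ContinuousLinearMap.neg_apply, innerSL_apply_apply, smul_eq_mul,
    ContinuousLinearMap.coe_smul', Pi.smul_apply]
  rw [real_inner_self_eq_norm_sq, real_inner_self_eq_norm_sq]
  simp only [real_inner_comm y d]
  -- basic positivity facts
  have hp' : p - 1 ≠ 0 := sub_ne_zero.mpr hp1.ne'
  have hD : (0:ℝ) < 1 - ‖d‖ ^ 2 := by nlinarith [norm_nonneg d]
  have hlam : (0:ℝ) < 2 * (p + 1) / (p - 1) ^ 2 :=
    div_pos (by linarith) (pow_pos (by linarith) 2)
  have hκ₀pos : 0 < κ₀ := hκ₀ ▸ Real.rpow_pos_of_pos hlam _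
  have hCpos : 0 < C := mul_pos hκ₀pos (Real.rpow_pos_of_pos hD _)
  -- C ^ p = lam * (1 - D) * C
  have hpow1 : κ₀ ^ (p - 1) = 2 * (p + 1) / (p - 1) ^ 2 := by
    rw [hκ₀, ← Real.rpow_mul hlam.le]
    rw [show 1 / (p - 1) * (p - 1) = 1 by field_simp, Real.rpow_one]
  have hpow2 : ((1 - ‖d‖ ^ 2) ^ (1 / (p - 1))) ^ (p - 1) = 1 - ‖d‖ ^ 2 := by
    rw [← Real.rpow_mul hD.le]
    rw [show 1 / (p - 1) * (p - 1) = 1 by field_simp, Real.rpow_one]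
  have hCp : C ^ p = 2 * (p + 1) / (p - 1) ^ 2 * (1 - ‖d‖ ^ 2) * C := by
    have e1 : C ^ p = C ^ (p - 1) * C ^ (1:ℝ) := by
      rw [← Real.rpow_add hCpos]; norm_num
    rw [e1, Real.rpow_one, hC,
      Real.mul_rpow hκ₀pos.le (Real.rpow_pos_of_pos hD _).le, hpow1, hpow2, ← hC]
  have hκy : κ y = C * (1 + (inner ℝ d y : ℝ)) ^ (-β) := hκU y hyU
  have hκyp : κ y ^ p = 2 * (p + 1) / (p - 1) ^ 2 * (1 - ‖d‖ ^ 2) * C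
      * (1 + (inner ℝ d y : ℝ)) ^ (-β - 1 - 1) := by
    rw [hκy, Real.mul_rpow hCpos.le (Real.rpow_nonneg hty.le _),
      ← Real.rpow_mul hty.le,
      show -β * p = -β - 1 - 1 by rw [hβ]; field_simp; ring, hCp]
  have hm1 : (1 - ‖y‖ ^ 2) ^ (α - 1) = (1 - ‖y‖ ^ 2) ^ α / (1 - ‖y‖ ^ 2) := by
    rw [Real.rpow_sub hm, Real.rpow_one]
  have ht2 : (1 + (inner ℝ d y : ℝ)) ^ (-β - 1 - 1)
      = (1 + (inner ℝ d y : ℝ)) ^ (-β) / (1 + (inner ℝ d y : ℝ)) / (1 + (inner ℝ d y : ℝ)) := by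
    rw [Real.rpow_sub hty, Real.rpow_sub hty, Real.rpow_one]
  have ht1 : (1 + (inner ℝ d y : ℝ)) ^ (-β - 1)
      = (1 + (inner ℝ d y : ℝ)) ^ (-β) / (1 + (inner ℝ d y : ℝ)) := by
    rw [Real.rpow_sub hty, Real.rpow_one]
  simp only [hA, hB, hg]
  simp only [real_inner_comm y d]
  have hty' : (0:ℝ) < 1 + (inner ℝ y d : ℝ) := by rwa [← real_inner_comm y d]
  have hκy' : κ y = C * (1 + (inner ℝ y d : ℝ)) ^ (-β) := by
    rw [hκy, real_inner_comm y d]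
  have hκyp' : κ y ^ p = 2 * (p + 1) / (p - 1) ^ 2 * (1 - ‖d‖ ^ 2) * C
      * (1 + (inner ℝ y d : ℝ)) ^ (-β - 1 - 1) := by
    rw [hκyp, real_inner_comm y d]
  have ht2' : (1 + (inner ℝ y d : ℝ)) ^ (-β - 1 - 1)
      = (1 + (inner ℝ y d : ℝ)) ^ (-β) / (1 + (inner ℝ y d : ℝ)) / (1 + (inner ℝ y d : ℝ)) := by
    rw [Real.rpow_sub hty', Real.rpow_sub hty', Real.rpow_one]
  have ht1' : (1 + (inner ℝ y d : ℝ)) ^ (-β - 1)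
      = (1 + (inner ℝ y d : ℝ)) ^ (-β) / (1 + (inner ℝ y d : ℝ)) := by
    rw [Real.rpow_sub hty', Real.rpow_one]
  rw [hκyp', hκy', hρ y, ht2', ht1', hm1]
  have hMpos : (0:ℝ) < (1 - ‖y‖ ^ 2) ^ α := Real.rpow_pos_of_pos hm _
  exact aux_final p α β C (inner ℝ y d) (‖y‖ ^ 2) (‖d‖ ^ 2) ((1 - ‖y‖ ^ 2) ^ α)
    ((1 + (inner ℝ y d : ℝ)) ^ (-β)) hp1 hβ hα hty' hm hMpos
end

section
/- Let p>1, d\in(-1,1), \nu>-1+|d|, and define \mu = 1/(1+\nu/(1-|d|)) and \lambda^{p-1} = (1-d^2)/((1+\nu)^2 - d^2). Then \min(\mu,\mu^2) \le \lambda^{p-1} \le \max(\mu,\mu^2). -/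
theorem stmt_3 (p d ν : ℝ) (hp : 1 < p) (hd : |d| < 1) (hν : -1 + |d| < ν)
    (μ lam : ℝ) (hμ : μ = (1 + ν / (1 - |d|))⁻¹)
    (hlam : lam = ((1 - d ^ 2) / ((1 + ν) ^ 2 - d ^ 2)) ^ (1 / (p - 1))) :
    min μ (μ ^ 2) ≤ lam ^ (p - 1) ∧ lam ^ (p - 1) ≤ max μ (μ ^ 2) := by
  have habs : 0 ≤ |d| := abs_nonneg d
  have hA : (0:ℝ) < 1 - |d| := by linarith
  have hS : (0:ℝ) < 1 - |d| + ν := by linarith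
  have hT : (0:ℝ) < 1 + |d| + ν := by linarith
  have hd2 : d ^ 2 = |d| ^ 2 := (sq_abs d).symm
  have hX1 : (0:ℝ) < 1 - d ^ 2 := by nlinarith
  have hX2 : (0:ℝ) < (1 + ν) ^ 2 - d ^ 2 := by nlinarith
  have hXpos : 0 < (1 - d ^ 2) / ((1 + ν) ^ 2 - d ^ 2) := div_pos hX1 hX2
  have hp1 : p - 1 ≠ 0 := by linarith
  have hlam' : lam ^ (p - 1) = (1 - d ^ 2) / ((1 + ν) ^ 2 - d ^ 2) := by
    rw [hlam, ← Real.rpow_mul hXpos.le, one_div, inv_mul_cancel₀ hp1, Real.rpow_one]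
  have hμ' : μ = (1 - |d|) / (1 - |d| + ν) := by
    rw [hμ]
    rw [show (1 + ν / (1 - |d|)) = (1 - |d| + ν) / (1 - |d|) by field_simp]
    rw [inv_div]
  have hfac : (1 + ν) ^ 2 - d ^ 2 = (1 - |d| + ν) * (1 + |d| + ν) := by nlinarith
  have hfac2 : 1 - d ^ 2 = (1 - |d|) * (1 + |d|) := by nlinarith
  rw [hlam', hμ', hfac, hfac2]
  rcases le_total 0 ν with h0 | h0
  · have h1 : ((1 - |d|) / (1 - |d| + ν)) ^ 2 ≤ (1 - |d|) * (1 + |d|) / ((1 - |d| + ν) * (1 + |d| + ν)) := by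
      rw [div_pow, div_le_div_iff₀ (by positivity) (by positivity)]
      nlinarith [mul_nonneg (mul_nonneg h0 habs) hS.le, sq_nonneg (1 - |d|)]
    have h2 : (1 - |d|) * (1 + |d|) / ((1 - |d| + ν) * (1 + |d| + ν)) ≤ (1 - |d|) / (1 - |d| + ν) := by
      rw [div_le_div_iff₀ (by positivity) (by positivity)]
      nlinarith [mul_nonneg (mul_nonneg h0 hA.le) hS.le]
    exact ⟨le_trans (min_le_right _ _) h1, le_trans h2 (le_max_left _ _)⟩
  · have h1 : (1 - |d|) / (1 - |d| + ν) ≤ (1 - |d|) * (1 + |d|) / ((1 - |d| + ν) * (1 + |d| + ν)) := by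
      rw [div_le_div_iff₀ (by positivity) (by positivity)]
      nlinarith [mul_nonneg (mul_nonneg (neg_nonneg.mpr h0) hA.le) hS.le]
    have h2 : (1 - |d|) * (1 + |d|) / ((1 - |d| + ν) * (1 + |d| + ν)) ≤ ((1 - |d|) / (1 - |d| + ν)) ^ 2 := by
      rw [div_pow, div_le_div_iff₀ (by positivity) (by positivity)]
      nlinarith [mul_nonneg (mul_nonneg (neg_nonneg.mpr h0) habs) hS.le, sq_nonneg (1 - |d|)]
    exact ⟨le_trans (min_le_left _ _) h1, le_trans h2 (le_max_right _ _)⟩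
end

section
/- Let \gamma > -1 and \beta \in \mathbb{R} with \gamma+1-\beta<0, and let I(\delta) = \int_{-1}^{1} (1-\xi^2)^{\gamma}(1+\delta\xi)^{-\beta}\,d\xi for \delta\in(-1,1). Then there exists a constant K>0 (depending on \gamma,\beta) such that I(\delta)\,(1-|\delta|)^{\beta-(\gamma+1)} \to K as |\delta|\to 1. -/
open MeasureTheory intervalIntegral Set Filter

private lemma aux_pow_le (γ : ℝ) {x : ℝ} (h1 : 1 ≤ x) (h2 : x ≤ 2) : x ^ γ ≤ 2 ^ |γ| :=
  le_trans (Real.rpow_le_rpow_of_exponent_le h1 (le_abs_self γ))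
    (Real.rpow_le_rpow (by linarith) h2 (abs_nonneg γ))

private lemma aux_pow_ge (γ : ℝ) {x : ℝ} (h1 : 1 ≤ x) (h2 : x ≤ 2) : 2 ^ (-|γ|) ≤ x ^ γ :=
  le_trans (Real.rpow_le_rpow_of_nonpos (by linarith) h2 (neg_nonpos.2 (abs_nonneg γ)))
    (Real.rpow_le_rpow_of_exponent_le h1 (neg_abs_le γ))

set_option maxHeartbeats 2000000 in
theorem stmt_6 (γ β : ℝ) (hγ : -1 < γ) (hβ : γ + 1 - β < 0)
    (I : ℝ → ℝ)
    (hI : ∀ δ : ℝ, I δ = ∫ ξ in (-1 : ℝ)..1, (1 - ξ ^ 2) ^ γ * (1 + δ * ξ) ^ (-β)) :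
    ∃ K : ℝ, 0 < K ∧
      Filter.Tendsto (fun δ : ℝ => I δ * (1 - |δ|) ^ (β - (γ + 1)))
        (Filter.comap (fun δ : ℝ => |δ|) (nhdsWithin 1 (Set.Iio 1))) (nhds K) := by
  have hβ0 : (0:ℝ) < β := by linarith
  have he : (0:ℝ) < β - (γ + 1) := by linarith
  -- integrability of the dominating function on (0, ∞)
  have hbound_int : IntegrableOn (fun u : ℝ => u ^ γ * (1 + u / 2) ^ (-β)) (Ioi 0) := by
    have h1 : IntegrableOn (fun u : ℝ => u ^ γ * (1 + u / 2) ^ (-β)) (Ioc 0 1) := by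
      refine Integrable.mono' ((intervalIntegrable_rpow' hγ (a := 0) (b := 1)).1) ?_ ?_
      · refine ContinuousOn.aestronglyMeasurable ?_ measurableSet_Ioc
        refine ContinuousOn.mul ?_ ?_
        · exact fun x hx =>
            (Real.continuousAt_rpow_const x γ (Or.inl (ne_of_gt hx.1))).continuousWithinAt
        · exact ContinuousOn.rpow_const ((continuous_const.add (continuous_id.div_const 2)).continuousOn)
            (fun x hx => Or.inl (by nlinarith [hx.1]))
      · filter_upwards [ae_restrict_mem measurableSet_Ioc] with u hu
        have h0 : (0:ℝ) ≤ u ^ γ := Real.rpow_nonneg hu.1.le _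
        have h2 : (0:ℝ) ≤ (1 + u / 2) ^ (-β) := Real.rpow_nonneg (by nlinarith [hu.1]) _
        rw [Real.norm_eq_abs, abs_of_nonneg (mul_nonneg h0 h2)]
        have : (1 + u / 2) ^ (-β) ≤ 1 :=
          Real.rpow_le_one_of_one_le_of_nonpos (by nlinarith [hu.1]) (by linarith)
        nlinarith
    have h2 : IntegrableOn (fun u : ℝ => u ^ γ * (1 + u / 2) ^ (-β)) (Ioi 1) := by
      refine Integrable.mono' (((integrableOn_Ioi_rpow_of_lt (a := γ - β) (by linarith)
        one_pos).const_mul ((2:ℝ) ^ β))) ?_ ?_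
      · refine ContinuousOn.aestronglyMeasurable ?_ measurableSet_Ioi
        refine ContinuousOn.mul ?_ ?_
        · exact fun x hx =>
            (Real.continuousAt_rpow_const x γ (Or.inl (by simp at hx; nlinarith))).continuousWithinAt
        · exact ContinuousOn.rpow_const ((continuous_const.add (continuous_id.div_const 2)).continuousOn)
            (fun x hx => Or.inl (by simp only [mem_Ioi] at hx; nlinarith))
      · filter_upwards [ae_restrict_mem measurableSet_Ioi] with u hu
        simp only [mem_Ioi] at hu
        have hu0 : (0:ℝ) < u := by linarith
        have h0 : (0:ℝ) ≤ u ^ γ := Real.rpow_nonneg hu0.le _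
        have hb : (0:ℝ) ≤ (1 + u / 2) ^ (-β) := Real.rpow_nonneg (by nlinarith) _
        rw [Real.norm_eq_abs, abs_of_nonneg (mul_nonneg h0 hb)]
        have hle : (1 + u / 2) ^ (-β) ≤ (u / 2) ^ (-β) :=
          Real.rpow_le_rpow_of_nonpos (by linarith) (by linarith) (by linarith)
        have hud : (u / 2) ^ (-β) = u ^ (-β) * 2 ^ β := by
          rw [Real.div_rpow hu0.le (by norm_num), Real.rpow_neg (by norm_num : (0:ℝ) ≤ 2)]
          field_simp
        calc u ^ γ * (1 + u / 2) ^ (-β) ≤ u ^ γ * (u / 2) ^ (-β) :=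
              mul_le_mul_of_nonneg_left hle h0
          _ = 2 ^ β * u ^ (γ - β) := by
              rw [hud, show γ - β = γ + -β by ring, Real.rpow_add hu0]; ring
    have : Ioi (0:ℝ) = Ioc 0 1 ∪ Ioi 1 := (Ioc_union_Ioi_eq_Ioi zero_le_one).symm
    rw [this]
    exact h1.union h2
  -- integrability of the limit function
  have hf_int : IntegrableOn (fun u : ℝ => u ^ γ * ((2:ℝ) ^ γ * (1 + u) ^ (-β))) (Ioi 0) := by
    refine Integrable.mono' (hbound_int.const_mul ((2:ℝ) ^ |γ|)) ?_ ?_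
    · refine ContinuousOn.aestronglyMeasurable
        (ContinuousOn.mul ?_ (ContinuousOn.mul continuousOn_const ?_)) measurableSet_Ioi
      · exact fun x hx =>
          (Real.continuousAt_rpow_const x γ (Or.inl (ne_of_gt hx))).continuousWithinAt
      · exact ContinuousOn.rpow_const ((continuous_const.add continuous_id).continuousOn)
          (fun x hx => Or.inl (by simp only [mem_Ioi] at hx; nlinarith))
    · filter_upwards [ae_restrict_mem measurableSet_Ioi] with u hu
      simp only [mem_Ioi] at hu
      have h0 : (0:ℝ) ≤ u ^ γ := Real.rpow_nonneg hu.le _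
      have h1 : (0:ℝ) ≤ (2:ℝ) ^ γ := Real.rpow_nonneg (by norm_num) _
      have h2 : (0:ℝ) ≤ (1 + u) ^ (-β) := Real.rpow_nonneg (by linarith) _
      have h3 : (0:ℝ) ≤ (1 + u/2) ^ (-β) := Real.rpow_nonneg (by linarith) _
      rw [Real.norm_eq_abs, abs_of_nonneg (mul_nonneg h0 (mul_nonneg h1 h2))]
      have hle1 : (2:ℝ) ^ γ ≤ 2 ^ |γ| := aux_pow_le γ one_le_two le_rfl
      have hle2 : (1 + u) ^ (-β) ≤ (1 + u/2) ^ (-β) :=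
        Real.rpow_le_rpow_of_nonpos (by linarith) (by linarith) (by linarith)
      have h4 : (0:ℝ) ≤ (2:ℝ) ^ |γ| := Real.rpow_nonneg (by norm_num) _
      calc u ^ γ * ((2:ℝ) ^ γ * (1 + u) ^ (-β))
          ≤ u ^ γ * ((2:ℝ) ^ |γ| * (1 + u/2) ^ (-β)) :=
            mul_le_mul_of_nonneg_left (mul_le_mul hle1 hle2 h2 h4) h0
        _ = 2 ^ |γ| * (u ^ γ * (1 + u / 2) ^ (-β)) := by ring
  set K := ∫ u in Ioi (0:ℝ), u ^ γ * ((2:ℝ) ^ γ * (1 + u) ^ (-β)) with hKdef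
  -- positivity of K
  have hKpos : 0 < K := by
    have hsub : Ioc (1:ℝ) 2 ⊆ Ioi 0 := fun x hx => lt_trans one_pos hx.1
    set c : ℝ := 2 ^ (-|γ|) * (2 ^ (-|γ|) * 3 ^ (-β)) with hc
    have hcpos : 0 < c := by
      have := Real.rpow_pos_of_pos (show (0:ℝ) < 2 by norm_num) (-|γ|)
      have := Real.rpow_pos_of_pos (show (0:ℝ) < 3 by norm_num) (-β)
      positivity
    have hge : ∀ u ∈ Ioc (1:ℝ) 2, c ≤ u ^ γ * ((2:ℝ) ^ γ * (1 + u) ^ (-β)) := by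
      intro u hu
      have h1 : 2 ^ (-|γ|) ≤ u ^ γ := aux_pow_ge γ hu.1.le hu.2
      have h2 : 2 ^ (-|γ|) ≤ (2:ℝ) ^ γ := aux_pow_ge γ one_le_two le_rfl
      have h3 : (3:ℝ) ^ (-β) ≤ (1 + u) ^ (-β) :=
        Real.rpow_le_rpow_of_nonpos (by linarith [hu.1]) (by linarith [hu.2]) (by linarith)
      have p1 : (0:ℝ) < 2 ^ (-|γ|) := Real.rpow_pos_of_pos (by norm_num) _
      have p3 : (0:ℝ) < (3:ℝ) ^ (-β) := Real.rpow_pos_of_pos (by norm_num) _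
      have hq : (0:ℝ) ≤ (2:ℝ) ^ γ := Real.rpow_nonneg (by norm_num) _
      rw [hc]
      exact mul_le_mul h1 (mul_le_mul h2 h3 p3.le hq) (mul_nonneg p1.le p3.le)
        (Real.rpow_nonneg (by linarith [hu.1] : (0:ℝ) ≤ u) _)
    have step1 : c * (volume (Ioc (1:ℝ) 2)).toReal
        ≤ ∫ u in Ioc (1:ℝ) 2, u ^ γ * ((2:ℝ) ^ γ * (1 + u) ^ (-β)) :=
      setIntegral_ge_of_const_le_real measurableSet_Ioc (by simp) hge (hf_int.mono_set hsub)
    have hvol : (volume (Ioc (1:ℝ) 2)).toReal = 1 := by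
      rw [Real.volume_Ioc]; norm_num
    have step2 : (∫ u in Ioc (1:ℝ) 2, u ^ γ * ((2:ℝ) ^ γ * (1 + u) ^ (-β)))
        ≤ ∫ u in Ioi (0:ℝ), u ^ γ * ((2:ℝ) ^ γ * (1 + u) ^ (-β)) := by
      refine setIntegral_mono_set hf_int ?_ (HasSubset.Subset.eventuallyLE hsub)
      filter_upwards [ae_restrict_mem measurableSet_Ioi] with u hu
      simp only [mem_Ioi] at hu
      have h0 : (0:ℝ) ≤ u ^ γ := Real.rpow_nonneg hu.le _
      have h1 : (0:ℝ) ≤ (2:ℝ) ^ γ := Real.rpow_nonneg (by norm_num) _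
      have h2 : (0:ℝ) ≤ (1 + u) ^ (-β) := Real.rpow_nonneg (by linarith) _
      positivity
    rw [hvol, mul_one] at step1
    rw [hKdef]
    linarith
  refine ⟨K, hKpos, ?_⟩
  -- symmetry of I
  have hIsymm : ∀ δ : ℝ, I (-δ) = I δ := by
    intro δ
    rw [hI, hI]
    have h := intervalIntegral.integral_comp_neg (a := (-1:ℝ)) (b := 1)
      (fun ξ => (1 - ξ ^ 2) ^ γ * (1 + δ * ξ) ^ (-β))
    simp only [neg_neg] at h
    rw [← h]
    refine intervalIntegral.integral_congr fun ξ _ => ?_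
    simp only [neg_sq, mul_neg, neg_mul]
  have hhalf : Ioo (1/2 : ℝ) 1 ∈ nhdsWithin (1:ℝ) (Iio 1) :=
    Ioo_mem_nhdsLT_of_mem ⟨by norm_num, le_rfl⟩
  -- interval integrability of the pieces
  have hint1 : ∀ δ : ℝ, 1/2 < δ → δ < 1 →
      IntervalIntegrable (fun ξ : ℝ => (1 - ξ ^ 2) ^ γ * (1 + δ * ξ) ^ (-β)) volume (-1) 0 := by
    intro δ hδ1 hδ2
    have hd0 : (0:ℝ) < 1 - δ := by linarith
    have hbase : IntervalIntegrable (fun ξ : ℝ => (1 + ξ) ^ γ) volume (-1) 0 := by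
      have h := (intervalIntegrable_rpow' hγ (a := 0) (b := 1)).comp_add_right 1
      norm_num at h
      have heq : (fun ξ : ℝ => (1 + ξ) ^ γ) = fun x : ℝ => (x + 1) ^ γ := by
        funext x; rw [add_comm]
      rw [heq]
      exact h
    refine IntervalIntegrable.mono_fun' (hbase.const_mul ((2:ℝ) ^ |γ| * (1-δ) ^ (-β))) ?_ ?_
    · have hset : Set.uIoc (-1:ℝ) 0 = Ioc (-1) 0 := uIoc_of_le (by norm_num)
      rw [hset, Measure.restrict_congr_set Ioo_ae_eq_Ioc.symm]
      refine ContinuousOn.aestronglyMeasurable (ContinuousOn.mul ?_ ?_) measurableSet_Ioo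
      · refine ContinuousOn.rpow_const (continuousOn_const.sub (continuousOn_pow 2))
          fun x hx => Or.inl ?_
        obtain ⟨h1, h2⟩ := hx
        intro h; nlinarith
      · refine ContinuousOn.rpow_const
          (continuousOn_const.add (continuousOn_const.mul continuousOn_id)) fun x hx => Or.inl ?_
        obtain ⟨h1, h2⟩ := hx
        intro h; nlinarith
    · have hset : Set.uIoc (-1:ℝ) 0 = Ioc (-1) 0 := uIoc_of_le (by norm_num)
      rw [hset]
      filter_upwards [ae_restrict_mem measurableSet_Ioc] with ξ hξ
      obtain ⟨h1, h2⟩ := hξ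
      have b1 : (0:ℝ) ≤ 1 + ξ := by linarith
      have b2 : (0:ℝ) ≤ 1 - ξ := by linarith
      have b3 : (0:ℝ) < 1 + δ * ξ := by nlinarith
      have b4 : 1 - δ ≤ 1 + δ * ξ := by nlinarith
      have hsq : (1:ℝ) - ξ ^ 2 = (1 + ξ) * (1 - ξ) := by ring
      have hnn : (0:ℝ) ≤ (1 - ξ^2) ^ γ * (1 + δ*ξ) ^ (-β) :=
        mul_nonneg (Real.rpow_nonneg (by nlinarith) _) (Real.rpow_nonneg b3.le _)
      rw [Real.norm_eq_abs, abs_of_nonneg hnn, hsq, Real.mul_rpow b1 b2]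
      have c1 : (1 - ξ) ^ γ ≤ 2 ^ |γ| := aux_pow_le γ (by linarith) (by linarith)
      have c2 : (1 + δ*ξ) ^ (-β) ≤ (1 - δ) ^ (-β) :=
        Real.rpow_le_rpow_of_nonpos hd0 b4 (by linarith)
      have n1 : (0:ℝ) ≤ (1 + ξ) ^ γ := Real.rpow_nonneg b1 _
      have n3 : (0:ℝ) ≤ (1 + δ*ξ) ^ (-β) := Real.rpow_nonneg b3.le _
      have n4 : (0:ℝ) ≤ (2:ℝ) ^ |γ| := Real.rpow_nonneg (by norm_num) _
      calc (1 + ξ) ^ γ * (1 - ξ) ^ γ * (1 + δ*ξ) ^ (-β)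
          ≤ (1 + ξ) ^ γ * (2 ^ |γ|) * ((1-δ) ^ (-β)) :=
            mul_le_mul (mul_le_mul_of_nonneg_left c1 n1) c2 n3 (mul_nonneg n1 n4)
        _ = 2 ^ |γ| * (1-δ) ^ (-β) * (1 + ξ) ^ γ := by ring
  -- the [0,1] piece: integrability, nonnegativity, uniform bound
  have hbase01 : IntervalIntegrable (fun ξ : ℝ => (1 - ξ) ^ γ) volume 0 1 := by
    have h := (intervalIntegrable_rpow' hγ (a := 1) (b := 0)).comp_sub_left 1
    norm_num at h
    exact h
  have hkey01 : ∀ δ : ℝ, 0 ≤ δ → ∀ ξ ∈ Icc (0:ℝ) 1,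
      (1 - ξ ^ 2) ^ γ * (1 + δ * ξ) ^ (-β) ≤ 2 ^ |γ| * (1 - ξ) ^ γ := by
    intro δ hδ0 ξ hξ
    obtain ⟨h1, h2⟩ := hξ
    have b1 : (0:ℝ) ≤ 1 + ξ := by linarith
    have b2 : (0:ℝ) ≤ 1 - ξ := by linarith
    have b3 : (1:ℝ) ≤ 1 + δ * ξ := by nlinarith
    have hsq : (1:ℝ) - ξ ^ 2 = (1 + ξ) * (1 - ξ) := by ring
    rw [hsq, Real.mul_rpow b1 b2]
    have c1 : (1 + ξ) ^ γ ≤ 2 ^ |γ| := aux_pow_le γ (by linarith) (by linarith)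
    have c2 : (1 + δ*ξ) ^ (-β) ≤ 1 :=
      Real.rpow_le_one_of_one_le_of_nonpos b3 (by linarith)
    have n1 : (0:ℝ) ≤ (1 + ξ) ^ γ := Real.rpow_nonneg b1 _
    have n2 : (0:ℝ) ≤ (1 - ξ) ^ γ := Real.rpow_nonneg b2 _
    calc (1 + ξ) ^ γ * (1 - ξ) ^ γ * (1 + δ*ξ) ^ (-β)
        ≤ (1 + ξ) ^ γ * (1 - ξ) ^ γ * 1 :=
          mul_le_mul_of_nonneg_left c2 (mul_nonneg n1 n2)
      _ = (1 + ξ) ^ γ * (1 - ξ) ^ γ := by ring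
      _ ≤ 2 ^ |γ| * (1 - ξ) ^ γ := mul_le_mul_of_nonneg_right c1 n2
  have hnonneg01 : ∀ δ : ℝ, 0 ≤ δ → ∀ ξ ∈ Icc (0:ℝ) 1,
      (0:ℝ) ≤ (1 - ξ ^ 2) ^ γ * (1 + δ * ξ) ^ (-β) := by
    intro δ hδ0 ξ hξ
    obtain ⟨h1, h2⟩ := hξ
    exact mul_nonneg (Real.rpow_nonneg (by nlinarith) _) (Real.rpow_nonneg (by nlinarith) _)
  have hint2 : ∀ δ : ℝ, 0 ≤ δ → δ < 1 →
      IntervalIntegrable (fun ξ : ℝ => (1 - ξ ^ 2) ^ γ * (1 + δ * ξ) ^ (-β)) volume 0 1 := by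
    intro δ hδ0 hδ2
    refine IntervalIntegrable.mono_fun' (hbase01.const_mul ((2:ℝ) ^ |γ|)) ?_ ?_
    · have hset : Set.uIoc (0:ℝ) 1 = Ioc 0 1 := uIoc_of_le (by norm_num)
      rw [hset, Measure.restrict_congr_set Ioo_ae_eq_Ioc.symm]
      refine ContinuousOn.aestronglyMeasurable (ContinuousOn.mul ?_ ?_) measurableSet_Ioo
      · refine ContinuousOn.rpow_const (continuousOn_const.sub (continuousOn_pow 2))
          fun x hx => Or.inl ?_
        obtain ⟨h1, h2⟩ := hx
        intro h; nlinarith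
      · refine ContinuousOn.rpow_const
          (continuousOn_const.add (continuousOn_const.mul continuousOn_id)) fun x hx => Or.inl ?_
        obtain ⟨h1, h2⟩ := hx
        intro h; nlinarith
    · have hset : Set.uIoc (0:ℝ) 1 = Ioc 0 1 := uIoc_of_le (by norm_num)
      rw [hset]
      filter_upwards [ae_restrict_mem measurableSet_Ioc] with ξ hξ
      have hmem : ξ ∈ Icc (0:ℝ) 1 := ⟨hξ.1.le, hξ.2⟩
      rw [Real.norm_eq_abs, abs_of_nonneg (hnonneg01 δ hδ0 ξ hmem)]
      exact hkey01 δ hδ0 ξ hmem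
  -- decomposition identity
  have decomp : ∀ δ : ℝ, δ ∈ Ioo (1/2 : ℝ) 1 →
      I δ * (1 - δ) ^ (β - (γ + 1)) =
        (∫ u in Ioi (0:ℝ), (Ioc (0:ℝ) (1-δ)⁻¹).indicator
            (fun u => u ^ γ * ((2 - (1-δ)*u) ^ γ * (1 + δ*u) ^ (-β))) u)
        + (1 - δ) ^ (β - (γ + 1)) * ∫ ξ in (0:ℝ)..1, (1 - ξ ^ 2) ^ γ * (1 + δ * ξ) ^ (-β) := by
    rintro δ ⟨hδ1, hδ2⟩
    have hd0 : (0:ℝ) < 1 - δ := by linarith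
    have hdne : (1:ℝ) - δ ≠ 0 := ne_of_gt hd0
    have hc0 : (0:ℝ) < (1-δ)⁻¹ := inv_pos.mpr hd0
    have hsplit : I δ = (∫ ξ in (-1:ℝ)..0, (1 - ξ ^ 2) ^ γ * (1 + δ * ξ) ^ (-β))
        + ∫ ξ in (0:ℝ)..1, (1 - ξ ^ 2) ^ γ * (1 + δ * ξ) ^ (-β) := by
      rw [hI]
      exact (intervalIntegral.integral_add_adjacent_intervals (hint1 δ hδ1 hδ2)
        (hint2 δ (by linarith) hδ2)).symm
    have hsub : (1-δ) • (∫ x in (0:ℝ)..(1-δ)⁻¹,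
        (1 - ((1-δ)*x + -1) ^ 2) ^ γ * (1 + δ * ((1-δ)*x + -1)) ^ (-β))
        = ∫ ξ in (-1:ℝ)..0, (1 - ξ ^ 2) ^ γ * (1 + δ * ξ) ^ (-β) := by
      have h := intervalIntegral.smul_integral_comp_mul_add (a := (0:ℝ)) (b := (1-δ)⁻¹)
        (f := fun ξ => (1 - ξ ^ 2) ^ γ * (1 + δ * ξ) ^ (-β)) (1-δ) (-1)
      rw [mul_zero, zero_add, mul_inv_cancel₀ hdne] at h
      norm_num at h ⊢
      convert h using 2
    have hcong : (∫ x in (0:ℝ)..(1-δ)⁻¹,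
          (1 - ((1-δ)*x + -1) ^ 2) ^ γ * (1 + δ * ((1-δ)*x + -1)) ^ (-β))
        = ((1-δ) ^ γ * (1-δ) ^ (-β)) *
          ∫ x in (0:ℝ)..(1-δ)⁻¹, x ^ γ * ((2 - (1-δ)*x) ^ γ * (1 + δ*x) ^ (-β)) := by
      rw [← intervalIntegral.integral_const_mul]
      refine intervalIntegral.integral_congr fun x hx => ?_
      rw [uIcc_of_le hc0.le] at hx
      obtain ⟨hx0, hx1⟩ := hx
      have hm1 : (1-δ)*x ≤ 1 := by
        calc (1-δ)*x ≤ (1-δ)*(1-δ)⁻¹ := mul_le_mul_of_nonneg_left hx1 hd0.le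
          _ = 1 := mul_inv_cancel₀ hdne
      have hmn : (0:ℝ) ≤ (1-δ)*x := mul_nonneg hd0.le hx0
      have e1 : (1:ℝ) - ((1-δ)*x + -1) ^ 2 = ((1-δ)*x) * (2 - (1-δ)*x) := by ring
      have e2 : (1:ℝ) + δ * ((1-δ)*x + -1) = (1-δ) * (1 + δ*x) := by ring
      rw [e1, e2, Real.mul_rpow hmn (by linarith), Real.mul_rpow hd0.le hx0,
        Real.mul_rpow hd0.le (by nlinarith : (0:ℝ) ≤ 1 + δ*x)]
      ring
    have hind : (∫ x in (0:ℝ)..(1-δ)⁻¹, x ^ γ * ((2 - (1-δ)*x) ^ γ * (1 + δ*x) ^ (-β)))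
        = ∫ u in Ioi (0:ℝ), (Ioc (0:ℝ) (1-δ)⁻¹).indicator
            (fun u => u ^ γ * ((2 - (1-δ)*u) ^ γ * (1 + δ*u) ^ (-β))) u := by
      rw [intervalIntegral.integral_of_le hc0.le,
        MeasureTheory.setIntegral_indicator measurableSet_Ioc,
        Set.inter_eq_self_of_subset_right Ioc_subset_Ioi_self]
    have key : (1-δ) * ((1-δ) ^ γ * (1-δ) ^ (-β)) * (1-δ) ^ (β - (γ+1)) = 1 := by
      have h1 : (1-δ) * ((1-δ) ^ γ * (1-δ) ^ (-β)) * (1-δ) ^ (β - (γ+1))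
          = (1-δ) ^ (1:ℝ) * (1-δ) ^ γ * (1-δ) ^ (-β) * (1-δ) ^ (β - (γ+1)) := by
        rw [Real.rpow_one]; ring
      rw [h1, ← Real.rpow_add hd0, ← Real.rpow_add hd0, ← Real.rpow_add hd0,
        show (1:ℝ) + γ + -β + (β - (γ+1)) = 0 by ring, Real.rpow_zero]
    rw [hsplit, ← hsub, hcong, hind]
    rw [smul_eq_mul]
    linear_combination (∫ u in Ioi (0:ℝ), (Ioc (0:ℝ) (1-δ)⁻¹).indicator
        (fun u => u ^ γ * ((2 - (1-δ)*u) ^ γ * (1 + δ*u) ^ (-β))) u) * key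
  -- part A: dominated convergence
  have hA : Tendsto (fun δ : ℝ => ∫ u in Ioi (0:ℝ), (Ioc (0:ℝ) (1-δ)⁻¹).indicator
        (fun u => u ^ γ * ((2 - (1-δ)*u) ^ γ * (1 + δ*u) ^ (-β))) u)
      (nhdsWithin 1 (Iio 1)) (nhds K) := by
    refine MeasureTheory.tendsto_integral_filter_of_dominated_convergence
      (fun u => 2 ^ |γ| * (u ^ γ * (1 + u / 2) ^ (-β))) ?_ ?_ (hbound_int.const_mul _) ?_
    · filter_upwards [hhalf] with δ hδ
      obtain ⟨hδ1, hδ2⟩ := hδ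
      have hd0 : (0:ℝ) < 1 - δ := by linarith
      rw [aestronglyMeasurable_indicator_iff measurableSet_Ioc,
        Measure.restrict_restrict measurableSet_Ioc,
        Set.inter_eq_self_of_subset_left Ioc_subset_Ioi_self]
      refine ContinuousOn.aestronglyMeasurable ?_ measurableSet_Ioc
      refine ContinuousOn.mul ?_ (ContinuousOn.mul ?_ ?_)
      · exact ContinuousOn.rpow_const continuousOn_id fun x hx => Or.inl (ne_of_gt hx.1)
      · refine ContinuousOn.rpow_const
          (continuousOn_const.sub (continuousOn_const.mul continuousOn_id))
          fun x hx => Or.inl ?_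
        obtain ⟨h1, h2⟩ := hx
        have : (1-δ)*x ≤ 1 := by
          calc (1-δ)*x ≤ (1-δ)*(1-δ)⁻¹ := mul_le_mul_of_nonneg_left h2 hd0.le
            _ = 1 := mul_inv_cancel₀ (ne_of_gt hd0)
        intro h; nlinarith
      · refine ContinuousOn.rpow_const
          (continuousOn_const.add (continuousOn_const.mul continuousOn_id))
          fun x hx => Or.inl ?_
        obtain ⟨h1, h2⟩ := hx
        have : (0:ℝ) < δ * x := by nlinarith
        intro h; nlinarith
    · filter_upwards [hhalf] with δ hδ
      obtain ⟨hδ1, hδ2⟩ := hδ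
      have hd0 : (0:ℝ) < 1 - δ := by linarith
      filter_upwards [ae_restrict_mem measurableSet_Ioi] with u hu
      simp only [mem_Ioi] at hu
      by_cases hmem : u ∈ Ioc (0:ℝ) (1-δ)⁻¹
      · rw [Set.indicator_of_mem hmem]
        obtain ⟨hu0, hu1⟩ := hmem
        have hm1 : (1-δ)*u ≤ 1 := by
          calc (1-δ)*u ≤ (1-δ)*(1-δ)⁻¹ := mul_le_mul_of_nonneg_left hu1 hd0.le
            _ = 1 := mul_inv_cancel₀ (ne_of_gt hd0)
        have hmn : (0:ℝ) ≤ (1-δ)*u := mul_nonneg hd0.le hu0.le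
        have b1 : (1:ℝ) ≤ 2 - (1-δ)*u := by linarith
        have b2 : 2 - (1-δ)*u ≤ 2 := by linarith
        have b3 : (0:ℝ) < 1 + u/2 := by linarith
        have b4 : 1 + u/2 ≤ 1 + δ*u := by nlinarith
        have c1 : (2 - (1-δ)*u) ^ γ ≤ 2 ^ |γ| := aux_pow_le γ b1 b2
        have c2 : (1 + δ*u) ^ (-β) ≤ (1 + u/2) ^ (-β) :=
          Real.rpow_le_rpow_of_nonpos b3 b4 (by linarith)
        have n0 : (0:ℝ) ≤ u ^ γ := Real.rpow_nonneg hu0.le _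
        have n1 : (0:ℝ) ≤ (2 - (1-δ)*u) ^ γ := Real.rpow_nonneg (by linarith) _
        have n2 : (0:ℝ) ≤ (1 + δ*u) ^ (-β) := Real.rpow_nonneg (by nlinarith) _
        have n4 : (0:ℝ) ≤ (2:ℝ) ^ |γ| := Real.rpow_nonneg (by norm_num) _
        rw [Real.norm_eq_abs, abs_of_nonneg (mul_nonneg n0 (mul_nonneg n1 n2))]
        calc u ^ γ * ((2 - (1-δ)*u) ^ γ * (1 + δ*u) ^ (-β))
            ≤ u ^ γ * (2 ^ |γ| * (1 + u/2) ^ (-β)) :=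
              mul_le_mul_of_nonneg_left (mul_le_mul c1 c2 n2 n4) n0
          _ = 2 ^ |γ| * (u ^ γ * (1 + u/2) ^ (-β)) := by ring
      · rw [Set.indicator_of_notMem hmem]
        have n0 : (0:ℝ) ≤ u ^ γ := Real.rpow_nonneg hu.le _
        have n2 : (0:ℝ) ≤ (1 + u/2) ^ (-β) := Real.rpow_nonneg (by linarith) _
        have n4 : (0:ℝ) ≤ (2:ℝ) ^ |γ| := Real.rpow_nonneg (by norm_num) _
        simp only [norm_zero]
        positivity
    · filter_upwards [ae_restrict_mem measurableSet_Ioi] with u hu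
      simp only [mem_Ioi] at hu
      have hev : ∀ᶠ δ in nhdsWithin (1:ℝ) (Iio 1),
          (Ioc (0:ℝ) (1-δ)⁻¹).indicator
            (fun u => u ^ γ * ((2 - (1-δ)*u) ^ γ * (1 + δ*u) ^ (-β))) u
          = u ^ γ * ((2 - (1-δ)*u) ^ γ * (1 + δ*u) ^ (-β)) := by
        have hlt : 1 - u⁻¹ < 1 := by
          have := inv_pos.mpr hu
          linarith
        filter_upwards [Ioo_mem_nhdsLT_of_mem
          (⟨hlt, le_rfl⟩ : (1:ℝ) ∈ Ioc (1 - u⁻¹) 1)] with δ hδ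
        obtain ⟨hδ1, hδ2⟩ := hδ
        have hd0 : (0:ℝ) < 1 - δ := by linarith
        have hlt2 : 1 - δ < u⁻¹ := by linarith
        have hlt3 : u < (1-δ)⁻¹ := by
          calc u = (u⁻¹)⁻¹ := (inv_inv u).symm
            _ < (1-δ)⁻¹ := inv_strictAnti₀ hd0 hlt2
        have hmem : u ∈ Ioc (0:ℝ) (1-δ)⁻¹ := ⟨hu, hlt3.le⟩
        exact Set.indicator_of_mem hmem _
      refine Tendsto.congr' (Filter.EventuallyEq.symm hev) ?_
      have T1 : Tendsto (fun δ : ℝ => (2 - (1-δ)*u) ^ γ) (nhdsWithin 1 (Iio 1))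
          (nhds ((2:ℝ) ^ γ)) := by
        have hb : Tendsto (fun δ : ℝ => 2 - (1-δ)*u) (nhds 1) (nhds 2) := by
          have hcont : Continuous (fun δ : ℝ => 2 - (1-δ)*u) := by continuity
          have h2 := hcont.tendsto 1
          norm_num at h2
          exact h2
        exact (hb.rpow_const (Or.inl (by norm_num))).mono_left nhdsWithin_le_nhds
      have T2 : Tendsto (fun δ : ℝ => (1 + δ*u) ^ (-β)) (nhdsWithin 1 (Iio 1))
          (nhds ((1+u) ^ (-β))) := by
        have hb : Tendsto (fun δ : ℝ => 1 + δ*u) (nhds 1) (nhds (1+u)) := by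
          have hcont : Continuous (fun δ : ℝ => 1 + δ*u) := by continuity
          have h2 := hcont.tendsto 1
          norm_num at h2
          exact h2
        exact (hb.rpow_const (Or.inl (by intro h; nlinarith))).mono_left nhdsWithin_le_nhds
      exact tendsto_const_nhds.mul (T1.mul T2)
  -- part B: the regular piece vanishes
  have hB : Tendsto (fun δ : ℝ => (1 - δ) ^ (β - (γ + 1)) *
      ∫ ξ in (0:ℝ)..1, (1 - ξ ^ 2) ^ γ * (1 + δ * ξ) ^ (-β))
      (nhdsWithin 1 (Iio 1)) (nhds 0) := by
    set C : ℝ := ∫ ξ in (0:ℝ)..1, 2 ^ |γ| * (1 - ξ) ^ γ with hC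
    refine squeeze_zero' (g := fun δ : ℝ => (1 - δ) ^ (β - (γ + 1)) * C) ?_ ?_ ?_
    · filter_upwards [hhalf] with δ hδ
      obtain ⟨hδ1, hδ2⟩ := hδ
      have h1 : (0:ℝ) ≤ ∫ ξ in (0:ℝ)..1, (1 - ξ ^ 2) ^ γ * (1 + δ * ξ) ^ (-β) :=
        intervalIntegral.integral_nonneg zero_le_one (hnonneg01 δ (by linarith))
      have h2 : (0:ℝ) ≤ (1 - δ) ^ (β - (γ + 1)) := Real.rpow_nonneg (by linarith) _
      positivity
    · filter_upwards [hhalf] with δ hδ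
      obtain ⟨hδ1, hδ2⟩ := hδ
      have h2 : (0:ℝ) ≤ (1 - δ) ^ (β - (γ + 1)) := Real.rpow_nonneg (by linarith) _
      have hle : (∫ ξ in (0:ℝ)..1, (1 - ξ ^ 2) ^ γ * (1 + δ * ξ) ^ (-β)) ≤ C :=
        intervalIntegral.integral_mono_on zero_le_one (hint2 δ (by linarith) hδ2)
          (hbase01.const_mul _) (hkey01 δ (by linarith))
      exact mul_le_mul_of_nonneg_left hle h2
    · have hb : Tendsto (fun δ : ℝ => 1 - δ) (nhds 1) (nhds 0) := by
        have hcont : Continuous (fun δ : ℝ => 1 - δ) := by continuity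
        have h2 := hcont.tendsto 1
        norm_num at h2
        exact h2
      have := (hb.rpow_const (Or.inr he.le)).mul_const C
      rw [Real.zero_rpow (ne_of_gt he), zero_mul] at this
      exact this.mono_left nhdsWithin_le_nhds
  -- one-sided main limit
  have main : Tendsto (fun δ : ℝ => I δ * (1 - δ) ^ (β - (γ + 1)))
      (nhdsWithin 1 (Iio 1)) (nhds K) := by
    have hsum := hA.add hB
    rw [add_zero] at hsum
    refine Tendsto.congr' ?_ hsum
    filter_upwards [hhalf] with δ hδ
    exact (decomp δ hδ).symm
  -- transfer through the comap filter
  have habs : Tendsto (fun δ : ℝ => |δ|)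
      (Filter.comap (fun δ : ℝ => |δ|) (nhdsWithin 1 (Set.Iio 1)))
      (nhdsWithin 1 (Iio 1)) := tendsto_comap
  have hfinal := main.comp habs
  refine hfinal.congr fun δ => ?_
  simp only [Function.comp_apply, abs_abs]
  rcases abs_choice δ with h | h
  · rw [h]
  · rw [h, hIsymm]
end

section
/- Let \gamma > -1 and \beta \in \mathbb{R} with \gamma+1-\beta>0, and let I(\delta) = \int_{-1}^{1} (1-\xi^2)^{\gamma}(1+\delta\xi)^{-\beta}\,d\xi for \delta\in(-1,1). Then I(\delta) converges to a finite positive limit K as |\delta|\to 1. -/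
open MeasureTheory Filter Set Real

/-- `(1 - |ξ|)^r` is interval integrable on `[-1, 1]` when `r > -1`. -/
lemma aux_intervalIntegrable_one_sub_abs_rpow {r : ℝ} (hr : -1 < r) :
    IntervalIntegrable (fun ξ : ℝ => (1 - |ξ|) ^ r) volume (-1) 1 := by
  have h0 : IntervalIntegrable (fun x : ℝ => x ^ r) volume 0 2 :=
    intervalIntegral.intervalIntegrable_rpow' hr
  have h1 : IntervalIntegrable (fun x : ℝ => (1 - x) ^ r) volume (-1) 1 := by
    have := h0.comp_sub_left 1
    norm_num at this
    exact this.symm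
  have h2 : IntervalIntegrable (fun x : ℝ => (1 + x) ^ r) volume (-1) 1 := by
    have := h0.comp_add_left 1
    norm_num at this
    exact this
  have hm : Measurable fun ξ : ℝ => (1 - |ξ|) ^ r := by fun_prop
  have ha : IntervalIntegrable (fun ξ : ℝ => (1 - |ξ|) ^ r) volume 0 1 := by
    refine (h1.mono_set' ?_).mono_fun hm.aestronglyMeasurable ?_
    · rw [uIoc_of_le (by norm_num : (0:ℝ) ≤ 1), uIoc_of_le (by norm_num : (-1:ℝ) ≤ 1)]
      exact Ioc_subset_Ioc (by norm_num) le_rfl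
    · filter_upwards [ae_restrict_mem measurableSet_uIoc] with x hx
      rw [uIoc_of_le (by norm_num : (0:ℝ) ≤ 1)] at hx
      rw [abs_of_pos hx.1]
  have hb : IntervalIntegrable (fun ξ : ℝ => (1 - |ξ|) ^ r) volume (-1) 0 := by
    refine (h2.mono_set' ?_).mono_fun hm.aestronglyMeasurable ?_
    · rw [uIoc_of_le (by norm_num : (-1:ℝ) ≤ 0), uIoc_of_le (by norm_num : (-1:ℝ) ≤ 1)]
      exact Ioc_subset_Ioc le_rfl (by norm_num)
    · filter_upwards [ae_restrict_mem measurableSet_uIoc] with x hx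
      rw [uIoc_of_le (by norm_num : (-1:ℝ) ≤ 0)] at hx
      rw [abs_of_nonpos hx.2, sub_neg_eq_add]
  exact hb.trans ha

/-- The key pointwise bound. -/
lemma aux_bound (γ β : ℝ) {δ ξ : ℝ} (hδ : |δ| ≤ 1) (hξ : ξ ∈ Ioo (-1:ℝ) 1) :
    (1 - ξ ^ 2) ^ γ * (1 + δ * ξ) ^ (-β) ≤
      max 1 (2 ^ γ) * ((1 - |ξ|) ^ (γ - β) + 2 ^ (-β) * (1 - |ξ|) ^ γ) := by
  have habs : |ξ| < 1 := abs_lt.2 ⟨hξ.1, hξ.2⟩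
  have hx : 0 < 1 - |ξ| := by linarith
  have hdx : |δ * ξ| ≤ |ξ| := by
    rw [abs_mul]
    exact mul_le_of_le_one_left (abs_nonneg ξ) hδ
  have hd1 : 1 - |ξ| ≤ 1 + δ * ξ := by
    have := neg_abs_le (δ * ξ); linarith
  have hd0 : 0 < 1 + δ * ξ := lt_of_lt_of_le hx hd1
  have hd2 : 1 + δ * ξ ≤ 2 := by
    have := le_abs_self (δ * ξ); linarith
  have h1 : (1 : ℝ) - ξ ^ 2 = (1 - |ξ|) * (1 + |ξ|) := by
    have : |ξ| ^ 2 = ξ ^ 2 := sq_abs ξ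
    nlinarith
  have h2 : (1 - ξ ^ 2) ^ γ = (1 - |ξ|) ^ γ * (1 + |ξ|) ^ γ := by
    rw [h1, Real.mul_rpow hx.le (by positivity)]
  have h3 : (1 + |ξ|) ^ γ ≤ max 1 (2 ^ γ) := by
    rcases le_or_gt 0 γ with hγ0 | hγ0
    · exact le_max_of_le_right (Real.rpow_le_rpow (by positivity) (by linarith) hγ0)
    · exact le_max_of_le_left
        (Real.rpow_le_one_of_one_le_of_nonpos (by linarith [abs_nonneg ξ]) hγ0.le)
  have h4 : (1 + δ * ξ) ^ (-β) ≤ (1 - |ξ|) ^ (-β) + 2 ^ (-β) := by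
    rcases le_or_gt 0 β with hβ0 | hβ0
    · have : (1 + δ * ξ) ^ (-β) ≤ (1 - |ξ|) ^ (-β) :=
        Real.rpow_le_rpow_of_nonpos hx hd1 (neg_nonpos.2 hβ0)
      have h2b : (0:ℝ) ≤ 2 ^ (-β) := by positivity
      linarith
    · have : (1 + δ * ξ) ^ (-β) ≤ 2 ^ (-β) :=
        Real.rpow_le_rpow hd0.le hd2 (by linarith)
      have h1b : (0:ℝ) ≤ (1 - |ξ|) ^ (-β) := by positivity
      linarith
  calc (1 - ξ ^ 2) ^ γ * (1 + δ * ξ) ^ (-β)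
      = (1 + |ξ|) ^ γ * ((1 - |ξ|) ^ γ * (1 + δ * ξ) ^ (-β)) := by rw [h2]; ring
    _ ≤ max 1 (2 ^ γ) * ((1 - |ξ|) ^ γ * ((1 - |ξ|) ^ (-β) + 2 ^ (-β))) := by
        apply mul_le_mul h3 _ (by positivity) (le_trans zero_le_one (le_max_left _ _))
        apply mul_le_mul_of_nonneg_left h4 (by positivity)
    _ = max 1 (2 ^ γ) * ((1 - |ξ|) ^ (γ - β) + 2 ^ (-β) * (1 - |ξ|) ^ γ) := by
        rw [mul_add, ← Real.rpow_add hx, sub_eq_add_neg]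
        ring_nf

/-- Convergence of the integral as `δ → c` within `(-1,1)`, for `c ∈ [-1,1]`. -/
lemma aux_tendsto (γ β : ℝ) (hγ : -1 < γ) (hβ : 0 < γ + 1 - β) {c : ℝ} (hc : |c| ≤ 1) :
    Tendsto (fun δ : ℝ => ∫ ξ in (-1:ℝ)..1, (1 - ξ ^ 2) ^ γ * (1 + δ * ξ) ^ (-β))
      (nhdsWithin c (Ioo (-1:ℝ) 1))
      (nhds (∫ ξ in (-1:ℝ)..1, (1 - ξ ^ 2) ^ γ * (1 + c * ξ) ^ (-β))) := by
  have hane : ∀ᵐ x : ℝ, x ≠ 1 := by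
    filter_upwards [compl_mem_ae_iff.mpr (measure_singleton (1:ℝ))] with x hx
    simpa using hx
  have hmem : ∀ x : ℝ, x ∈ uIoc (-1:ℝ) 1 → x ≠ 1 → x ∈ Ioo (-1:ℝ) 1 := by
    intro x hx hne
    rw [uIoc_of_le (by norm_num : (-1:ℝ) ≤ 1)] at hx
    exact ⟨hx.1, lt_of_le_of_ne hx.2 hne⟩
  apply intervalIntegral.tendsto_integral_filter_of_dominated_convergence
    (fun ξ => max 1 ((2:ℝ) ^ γ) * ((1 - |ξ|) ^ (γ - β) + 2 ^ (-β) * (1 - |ξ|) ^ γ))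
  · exact Eventually.of_forall fun δ => (Measurable.aestronglyMeasurable (by fun_prop))
  · filter_upwards [self_mem_nhdsWithin] with δ hδ
    filter_upwards [hane] with x hne hx
    have hx' := hmem x hx hne
    have hδ' : |δ| ≤ 1 := (abs_lt.2 ⟨hδ.1, hδ.2⟩).le
    have h0 : 0 < 1 + δ * x := by
      have h1 : |δ * x| < 1 := by
        rw [abs_mul]
        calc |δ| * |x| ≤ 1 * |x| := mul_le_mul_of_nonneg_right hδ' (abs_nonneg x)
          _ < 1 := by rw [one_mul]; exact abs_lt.2 ⟨hx'.1, hx'.2⟩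
      have := neg_abs_le (δ * x); linarith
    have hnn : 0 ≤ (1 - x ^ 2) ^ γ * (1 + δ * x) ^ (-β) := by
      have : (0:ℝ) < 1 - x ^ 2 := by nlinarith [hx'.1, hx'.2]
      positivity
    rw [Real.norm_eq_abs, abs_of_nonneg hnn]
    exact aux_bound γ β hδ' hx'
  · exact ((aux_intervalIntegrable_one_sub_abs_rpow (by linarith)).add
      ((aux_intervalIntegrable_one_sub_abs_rpow hγ).const_mul _)).const_mul _
  · filter_upwards [hane] with x hne hx
    have hx' := hmem x hx hne
    have hcx : 0 < 1 + c * x := by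
      have h1 : |c * x| < 1 := by
        rw [abs_mul]
        calc |c| * |x| ≤ 1 * |x| := mul_le_mul_of_nonneg_right hc (abs_nonneg x)
          _ < 1 := by rw [one_mul]; exact abs_lt.2 ⟨hx'.1, hx'.2⟩
      have := neg_abs_le (c * x); linarith
    apply Tendsto.const_mul
    have hcont : ContinuousAt (fun y : ℝ => y ^ (-β)) (1 + c * x) :=
      Real.continuousAt_rpow_const _ _ (Or.inl hcx.ne')
    have hlin : Tendsto (fun δ : ℝ => 1 + δ * x) (nhdsWithin c (Ioo (-1:ℝ) 1))
        (nhds (1 + c * x)) :=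
      ((continuous_const.add (continuous_id.mul continuous_const)).tendsto c).mono_left
        nhdsWithin_le_nhds
    exact hcont.tendsto.comp hlin

theorem stmt_7 (γ β : ℝ) (hγ : -1 < γ) (hβ : 0 < γ + 1 - β)
    (I : ℝ → ℝ)
    (hI : ∀ δ : ℝ, I δ = ∫ ξ in (-1 : ℝ)..1, (1 - ξ ^ 2) ^ γ * (1 + δ * ξ) ^ (-β)) :
    ∃ K : ℝ, 0 < K ∧
      Filter.Tendsto I
        (Filter.comap (fun δ : ℝ => |δ|) (nhdsWithin 1 (Set.Iio 1))) (nhds K) := by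
  set K : ℝ := ∫ ξ in (-1:ℝ)..1, (1 - ξ ^ 2) ^ γ * (1 + 1 * ξ) ^ (-β) with hK
  -- integrability of the limit function
  have hfint : IntervalIntegrable
      (fun ξ : ℝ => (1 - ξ ^ 2) ^ γ * (1 + 1 * ξ) ^ (-β)) volume (-1) 1 := by
    refine IntervalIntegrable.mono_fun'
      (g := fun ξ => max 1 (2 ^ γ) * ((1 - |ξ|) ^ (γ - β) + 2 ^ (-β) * (1 - |ξ|) ^ γ))
      (((aux_intervalIntegrable_one_sub_abs_rpow (by linarith)).add
        ((aux_intervalIntegrable_one_sub_abs_rpow hγ).const_mul _)).const_mul _)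
      (Measurable.aestronglyMeasurable (by fun_prop)) ?_
    have hane : ∀ᵐ x : ℝ, x ≠ 1 := by
      filter_upwards [compl_mem_ae_iff.mpr (measure_singleton (1:ℝ))] with x hx
      simpa using hx
    filter_upwards [ae_restrict_mem measurableSet_uIoc, ae_restrict_of_ae hane]
      with x hx hne
    rw [uIoc_of_le (by norm_num : (-1:ℝ) ≤ 1)] at hx
    have hx' : x ∈ Ioo (-1:ℝ) 1 := ⟨hx.1, lt_of_le_of_ne hx.2 hne⟩
    have h0 : 0 < 1 + 1 * x := by rw [one_mul]; linarith [hx'.1]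
    have hnn : 0 ≤ (1 - x ^ 2) ^ γ * (1 + 1 * x) ^ (-β) := by
      have : (0:ℝ) < 1 - x ^ 2 := by nlinarith [hx'.1, hx'.2]
      positivity
    rw [Real.norm_eq_abs, abs_of_nonneg hnn]
    exact aux_bound γ β (by norm_num) hx'
  have hKpos : 0 < K := by
    refine intervalIntegral.intervalIntegral_pos_of_pos_on hfint ?_ (by norm_num)
    intro x hx
    have h1 : (0:ℝ) < 1 - x ^ 2 := by nlinarith [hx.1, hx.2]
    have h2 : (0:ℝ) < 1 + 1 * x := by rw [one_mul]; linarith [hx.1]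
    positivity
  -- symmetry: the limit at c = -1 is also K
  have hsymm : (∫ ξ in (-1:ℝ)..1, (1 - ξ ^ 2) ^ γ * (1 + (-1) * ξ) ^ (-β)) = K := by
    have := intervalIntegral.integral_comp_neg
      (fun ξ : ℝ => (1 - ξ ^ 2) ^ γ * (1 + 1 * ξ) ^ (-β)) (a := -1) (b := 1)
    norm_num at this ⊢
    rw [this, hK]
    norm_num
  -- tendsto at 1 from the left
  have hle1 : nhdsWithin (1:ℝ) (Iio 1) ≤ nhdsWithin (1:ℝ) (Ioo (-1:ℝ) 1) :=
    nhdsWithin_le_iff.mpr (Ioo_mem_nhdsLT_of_mem ⟨by norm_num, le_refl 1⟩)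
  have hle2 : nhdsWithin (-1:ℝ) (Ioi (-1)) ≤ nhdsWithin (-1:ℝ) (Ioo (-1:ℝ) 1) :=
    nhdsWithin_le_iff.mpr (Ioo_mem_nhdsGT_of_mem ⟨le_refl (-1:ℝ), by norm_num⟩)
  have T1 : Tendsto I (nhdsWithin (1:ℝ) (Iio 1)) (nhds K) := by
    refine Tendsto.congr (fun δ => (hI δ).symm) ?_
    exact (aux_tendsto γ β hγ hβ (c := 1) (by norm_num)).mono_left hle1
  have T2 : Tendsto I (nhdsWithin (-1:ℝ) (Ioi (-1))) (nhds K) := by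
    refine Tendsto.congr (fun δ => (hI δ).symm) ?_
    have := (aux_tendsto γ β hγ hβ (c := -1) (by norm_num)).mono_left hle2
    rwa [hsymm] at this
  -- the comap filter is below the sup of the two one-sided filters
  have hle : Filter.comap (fun δ : ℝ => |δ|) (nhdsWithin 1 (Set.Iio 1)) ≤
      nhdsWithin (1:ℝ) (Iio 1) ⊔ nhdsWithin (-1:ℝ) (Ioi (-1)) := by
    intro s hs
    rw [Filter.mem_sup] at hs
    obtain ⟨hs1, hs2⟩ := hs
    obtain ⟨a, ha, hsub1⟩ := mem_nhdsLT_iff_exists_Ioo_subset.mp hs1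
    obtain ⟨b, hb, hsub2⟩ := mem_nhdsGT_iff_exists_Ioo_subset.mp hs2
    rw [Filter.mem_comap]
    refine ⟨Ioo (max a (-b)) 1, Ioo_mem_nhdsLT_of_mem ⟨?_, le_refl 1⟩, ?_⟩
    · simp only [max_lt_iff]
      exact ⟨ha, by simpa [neg_lt] using hb⟩
    · intro δ hδ
      simp only [mem_preimage, mem_Ioo, max_lt_iff] at hδ
      obtain ⟨⟨hδa, hδb⟩, hδ1⟩ := hδ
      rcases le_or_gt 0 δ with h0 | h0
      · rw [abs_of_nonneg h0] at hδa hδ1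
        exact hsub1 ⟨hδa, hδ1⟩
      · rw [abs_of_neg h0] at hδb hδ1
        exact hsub2 ⟨by linarith, by linarith⟩
  exact ⟨K, hKpos, (T1.sup T2).mono_left hle⟩
end

section
/- For every d\in(-1,1), \int_{\mathcal{E}(d)} \kappa(d e_1,Y)^{p+1}\rho(Y)\,dY = \kappa_0^{p+1}\int_{|y|<1/2}\rho(y)\,dy, where \mathcal{E}(d)\subset B(0,1)\subset\mathbb{R}^2 is the ellipse centered at (-3d/(4-d^2),0) with horizontal semi-axis a(d)=2(1-d^2)/(4-d^2) and vertical semi-axis b(d)=\sqrt{(1-d^2)/(4-d^2)}. -/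
open MeasureTheory

lemma ellipse_iff (d : ℝ) (hdl : -1 < d) (hdr : d < 1) (Y0 Y1 : ℝ) :
    ((Y0 - (-(3 * d) / (4 - d ^ 2))) / (2 * (1 - d ^ 2) / (4 - d ^ 2))) ^ 2
        + (Y1 / Real.sqrt ((1 - d ^ 2) / (4 - d ^ 2))) ^ 2 < 1 ↔
      4 * (Y0 + d) ^ 2 + 4 * (1 - d ^ 2) * Y1 ^ 2 < (1 + d * Y0) ^ 2 := by
  have hv : (0:ℝ) < 1 - d^2 := by nlinarith
  have hu : (0:ℝ) < 4 - d^2 := by nlinarith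
  have h1 : (Y1 / Real.sqrt ((1 - d ^ 2) / (4 - d ^ 2)))^2
      = Y1^2 * ((4 - d^2)/(1 - d^2)) := by
    rw [div_pow, Real.sq_sqrt (by positivity)]
    field_simp
  have h2 : ((Y0 - (-(3 * d) / (4 - d ^ 2))) / (2 * (1 - d ^ 2) / (4 - d ^ 2)))^2
      = ((4 - d^2) * Y0 + 3*d)^2 / (4 * (1 - d^2)^2) := by
    rw [show (Y0 - (-(3 * d) / (4 - d ^ 2))) / (2 * (1 - d ^ 2) / (4 - d ^ 2))
        = ((4 - d^2) * Y0 + 3*d) / (2 * (1 - d^2)) from by field_simp; ring, div_pow]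
    congr 1
    ring
  rw [h1, h2]
  rw [div_add' _ _ _ (by positivity), div_lt_one (by positivity)]
  rw [show Y1 ^ 2 * ((4 - d ^ 2) / (1 - d ^ 2)) * (4 * (1 - d ^ 2) ^ 2)
      = 4 * Y1 ^ 2 * (4 - d ^ 2) * (1 - d ^ 2) from by field_simp]
  constructor <;> intro h
  · nlinarith [hu, hv, sq_nonneg Y1, mul_pos hu hv, mul_pos hv hv]
  · nlinarith [hu, hv, sq_nonneg Y1, mul_pos hu hv, mul_pos hv hv]

lemma one_add_pos (d : ℝ) (hdl : -1 < d) (hdr : d < 1) (Y0 Y1 : ℝ)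
    (h : 4 * (Y0 + d) ^ 2 + 4 * (1 - d ^ 2) * Y1 ^ 2 < (1 + d * Y0) ^ 2) :
    0 < 1 + d * Y0 := by
  have hv : (0:ℝ) < 1 - d^2 := by nlinarith
  have hF : (0:ℝ) < (1 - 2*d + (d - 2) * Y0) * (1 + 2*d + (d + 2) * Y0) := by
    nlinarith [sq_nonneg Y1]
  have hF1 : 0 < 1 - 2*d + (d - 2) * Y0 := by
    by_contra hc
    push_neg at hc
    have hF2 : 1 + 2*d + (d + 2) * Y0 < 0 := by nlinarith
    nlinarith
  have hF2 : 0 < 1 + 2*d + (d + 2) * Y0 := by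
    by_contra hc
    push_neg at hc
    have : 1 - 2*d + (d - 2) * Y0 < 0 := by nlinarith
    nlinarith
  rcases le_or_gt 0 d with hd0 | hd0
  · nlinarith
  · nlinarith

lemma rpow_magic (p s e m κ : ℝ) (hp : 1 < p) (hs : 0 < s) (he : 0 < e)
    (hm : 0 < m) (hκ : 0 < κ) :
    s^3/e^3 * ((κ * (s^2) ^ (1/(p-1)) / ((s^2/e)) ^ (2/(p-1))) ^ (p+1)
      * (s^2 * m / e^2) ^ ((5-p)/(2*(p-1)))) = κ ^ (p+1) * m ^ ((5-p)/(2*(p-1))) := by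
  have hp0 : (0:ℝ) < p - 1 := by linarith
  have h1 : (0:ℝ) < (s^2) ^ (1/(p-1)) := Real.rpow_pos_of_pos (by positivity) _
  have h2 : (0:ℝ) < (s^2/e) ^ (2/(p-1)) := Real.rpow_pos_of_pos (by positivity) _
  have hL : (0:ℝ) < s^3/e^3 * ((κ * (s^2) ^ (1/(p-1)) / ((s^2/e)) ^ (2/(p-1))) ^ (p+1)
      * (s^2 * m / e^2) ^ ((5-p)/(2*(p-1)))) := by positivity
  have hR : (0:ℝ) < κ ^ (p+1) * m ^ ((5-p)/(2*(p-1))) := by positivity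
  apply Real.log_injOn_pos (Set.mem_Ioi.2 hL) (Set.mem_Ioi.2 hR)
  have hs2 : (0:ℝ) < s^2 := by positivity
  have hse : (0:ℝ) < s^2/e := by positivity
  have hX : (0:ℝ) < κ * (s^2) ^ (1/(p-1)) / ((s^2/e)) ^ (2/(p-1)) := by positivity
  have hlogX : Real.log (κ * (s^2) ^ (1/(p-1)) / ((s^2/e)) ^ (2/(p-1)))
      = Real.log κ + (1/(p-1)) * (2 * Real.log s) - (2/(p-1)) * (2 * Real.log s - Real.log e) := by
    rw [Real.log_div (by positivity) h2.ne', Real.log_mul hκ.ne' h1.ne',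
      Real.log_rpow hs2, Real.log_rpow hse, Real.log_div hs2.ne' he.ne', Real.log_pow]
    push_cast
    ring
  rw [Real.log_mul (by positivity) (by positivity),
    Real.log_mul (by positivity) (by positivity),
    Real.log_mul (by positivity) (by positivity),
    Real.log_div (by positivity) (by positivity),
    Real.log_rpow hX, hlogX,
    Real.log_rpow (show (0:ℝ) < s^2*m/e^2 by positivity),
    Real.log_div (by positivity) (by positivity),
    Real.log_mul hs2.ne' hm.ne',
    Real.log_rpow hκ, Real.log_rpow hm,
    Real.log_pow, Real.log_pow, Real.log_pow, Real.log_pow]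
  push_cast
  field_simp
  ring

set_option maxHeartbeats 1000000 in
theorem stmt_8 (p : ℝ) (hp1 : 1 < p) (hp2 : p < 5)
    (α κ₀ : ℝ) (hα : α = (5 - p) / (2 * (p - 1)))
    (hκ₀ : κ₀ = (2 * (p + 1) / (p - 1) ^ 2) ^ (1 / (p - 1)))
    (ρ : EuclideanSpace ℝ (Fin 2) → ℝ)
    (hρ : ∀ y, ρ y = (1 - ‖y‖ ^ 2) ^ α) :
    ∀ d : ℝ, d ∈ Set.Ioo (-1 : ℝ) 1 →
      (∫ Y in {Y : EuclideanSpace ℝ (Fin 2) |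
          ((Y 0 - (-(3 * d) / (4 - d ^ 2))) / (2 * (1 - d ^ 2) / (4 - d ^ 2))) ^ 2
            + (Y 1 / Real.sqrt ((1 - d ^ 2) / (4 - d ^ 2))) ^ 2 < 1},
          (κ₀ * (1 - d ^ 2) ^ (1 / (p - 1)) / (1 + d * Y 0) ^ (2 / (p - 1))) ^ (p + 1) * ρ Y)
        = κ₀ ^ (p + 1) *
            ∫ y in Metric.ball (0 : EuclideanSpace ℝ (Fin 2)) (1 / 2), ρ y := by
  have hp0 : (0:ℝ) < p - 1 := by linarith
  have hκpos : (0:ℝ) < κ₀ := by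
    rw [hκ₀]; positivity
  intro d hd
  obtain ⟨hdl, hdr⟩ := hd
  have hv : (0:ℝ) < 1 - d^2 := by nlinarith
  have hu : (0:ℝ) < 4 - d^2 := by nlinarith
  set s : ℝ := Real.sqrt (1 - d^2) with hs_def
  have hs0 : 0 < s := Real.sqrt_pos.2 hv
  have hs2 : s^2 = 1 - d^2 := Real.sq_sqrt hv.le
  have hnorm2 : ∀ z : EuclideanSpace ℝ (Fin 2), ‖z‖^2 = (z 0)^2 + (z 1)^2 := by
    intro z
    rw [EuclideanSpace.norm_eq, Real.sq_sqrt (by positivity)]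
    simp [Fin.sum_univ_two]
  -- membership facts
  have hball : ∀ y : EuclideanSpace ℝ (Fin 2),
      y ∈ Metric.ball (0 : EuclideanSpace ℝ (Fin 2)) (1/2) ↔ (y 0)^2 + (y 1)^2 < 1/4 := by
    intro y
    rw [Metric.mem_ball, dist_zero_right]
    constructor
    · intro h
      nlinarith [hnorm2 y, norm_nonneg y]
    · intro h
      nlinarith [hnorm2 y, norm_nonneg y]
  have he_ball : ∀ y : EuclideanSpace ℝ (Fin 2),
      y ∈ Metric.ball (0 : EuclideanSpace ℝ (Fin 2)) (1/2) → 0 < 1 - d * y 0 := by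
    intro y hy
    have h14 := (hball y).1 hy
    nlinarith [sq_nonneg (y 1), sq_nonneg (d - y 0), sq_nonneg (d + y 0)]
  set L : EuclideanSpace ℝ (Fin 2) ≃L[ℝ] (Fin 2 → ℝ) := EuclideanSpace.equiv (Fin 2) ℝ with hL
  set g : (Fin 2 → ℝ) → (Fin 2 → ℝ) :=
    fun x => ![(x 0 - d)/(1 - d * x 0), (x 1 * s)/(1 - d * x 0)] with hg
  set fm : EuclideanSpace ℝ (Fin 2) → EuclideanSpace ℝ (Fin 2) :=
    fun y => L.symm (g (L y)) with hfm
  have hfm0 : ∀ y : EuclideanSpace ℝ (Fin 2), fm y 0 = (y 0 - d)/(1 - d * y 0) := fun y => rfl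
  have hfm1 : ∀ y : EuclideanSpace ℝ (Fin 2), fm y 1 = (y 1 * s)/(1 - d * y 0) := fun y => rfl
  -- the derivative
  set M : (Fin 2 → ℝ) → Matrix (Fin 2) (Fin 2) ℝ := fun x =>
    !![(1 - d^2)/(1 - d * x 0)^2, 0; d * x 1 * s/(1 - d * x 0)^2, s/(1 - d * x 0)] with hM
  set g' : (Fin 2 → ℝ) → (Fin 2 → ℝ) →L[ℝ] (Fin 2 → ℝ) := fun x =>
    LinearMap.toContinuousLinearMap (Matrix.toLin' (M x)) with hg'
  set f' : EuclideanSpace ℝ (Fin 2) →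
      EuclideanSpace ℝ (Fin 2) →L[ℝ] EuclideanSpace ℝ (Fin 2) := fun y =>
    ((L.symm : (Fin 2 → ℝ) →L[ℝ] EuclideanSpace ℝ (Fin 2)).comp (g' (L y))).comp
      (L : EuclideanSpace ℝ (Fin 2) →L[ℝ] (Fin 2 → ℝ)) with hf'
  have hg'apply : ∀ x v : Fin 2 → ℝ, g' x v =
      ![(1 - d^2)/(1 - d * x 0)^2 * v 0,
        d * x 1 * s/(1 - d * x 0)^2 * v 0 + s/(1 - d * x 0) * v 1] := by
    intro x v
    ext i
    fin_cases i <;>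
      simp [hg', hM, Matrix.toLin'_apply, Matrix.mulVec, dotProduct, Matrix.vecHead, Matrix.vecTail,
        Fin.sum_univ_two]
  have hder : ∀ y : EuclideanSpace ℝ (Fin 2), (1 - d * y 0) ≠ 0 → HasFDerivAt fm (f' y) y := by
    intro y hy
    have hgd : HasFDerivAt g (g' (L y)) (L y) := by
      rw [hasFDerivAt_pi']
      intro i
      have hproj0 := (ContinuousLinearMap.proj (R := ℝ) (φ := fun _ : Fin 2 => ℝ)
        (0 : Fin 2)).hasFDerivAt (x := L y)
      have hproj1 := (ContinuousLinearMap.proj (R := ℝ) (φ := fun _ : Fin 2 => ℝ)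
        (1 : Fin 2)).hasFDerivAt (x := L y)
      fin_cases i
      · have h0 : HasDerivAt (fun t : ℝ => (t - d)/(1 - d * t))
            ((1 - d^2)/(1 - d * (y 0))^2) (y 0) := by
          have h1 : HasDerivAt (fun t : ℝ => t - d) 1 (y 0) :=
            (hasDerivAt_id (y 0)).sub_const d
          have h2 : HasDerivAt (fun t : ℝ => 1 - d * t) (-d) (y 0) := by
            simpa using ((hasDerivAt_id (y 0)).const_mul d).const_sub 1
          have := h1.div h2 hy
          refine this.congr_deriv ?_
          ring
        have hcomp := h0.comp_hasFDerivAt (L y) hproj0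
        refine hcomp.congr_fderiv ?_
        ext x
        simp [hg'apply, show (L y) 0 = y 0 from rfl]
      · have hc : HasFDerivAt (fun x : Fin 2 → ℝ => x 1 * s)
            (s • (ContinuousLinearMap.proj (R := ℝ) (φ := fun _ : Fin 2 => ℝ)
              (1 : Fin 2))) (L y) := by
          simpa using hproj1.mul_const s
        have h0 : HasDerivAt (fun t : ℝ => (1 - d * t)⁻¹) (d/(1 - d * (y 0))^2) (y 0) := by
          have h2 : HasDerivAt (fun t : ℝ => 1 - d * t) (-d) (y 0) := by
            simpa using ((hasDerivAt_id (y 0)).const_mul d).const_sub 1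
          have := h2.inv hy
          refine this.congr_deriv ?_
          ring
        have hd2 : HasFDerivAt (fun x : Fin 2 → ℝ => (1 - d * x 0)⁻¹)
            ((d/(1 - d * (y 0))^2) • (ContinuousLinearMap.proj (R := ℝ)
              (φ := fun _ : Fin 2 => ℝ) (0 : Fin 2))) (L y) :=
          by have := h0.comp_hasFDerivAt (L y) hproj0; exact this
        have hmul := hc.mul hd2
        refine hmul.congr_fderiv ?_
        ext x
        simp [hg'apply, show (L y) 0 = y 0 from rfl, show (L y) 1 = y 1 from rfl]
        ring
    exact (L.symm.hasFDerivAt.comp _ (hgd.comp y L.hasFDerivAt))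
  have hdet : ∀ y : EuclideanSpace ℝ (Fin 2), (f' y).det = (1 - d^2) * s / (1 - d * y 0)^3 := by
    intro y
    have h1 : (f' y).det = LinearMap.det (Matrix.toLin' (M (L y))) := by
      have : ((f' y : EuclideanSpace ℝ (Fin 2) →L[ℝ] EuclideanSpace ℝ (Fin 2)) :
          EuclideanSpace ℝ (Fin 2) →ₗ[ℝ] EuclideanSpace ℝ (Fin 2))
          = (L.symm.toLinearEquiv : (Fin 2 → ℝ) →ₗ[ℝ] EuclideanSpace ℝ (Fin 2)) ∘ₗ
            (Matrix.toLin' (M (L y))) ∘ₗ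
            (L.symm.toLinearEquiv.symm : EuclideanSpace ℝ (Fin 2) →ₗ[ℝ] (Fin 2 → ℝ)) := rfl
      rw [ContinuousLinearMap.det, this, LinearMap.det_conj]
    rw [h1, LinearMap.det_toLin', Matrix.det_fin_two_of,
      show (L y) 0 = y 0 from rfl, show (L y) 1 = y 1 from rfl]
    field_simp
    ring
  -- the ellipse is the image of the ball
  have himg : {Y : EuclideanSpace ℝ (Fin 2) |
      ((Y 0 - (-(3 * d) / (4 - d ^ 2))) / (2 * (1 - d ^ 2) / (4 - d ^ 2))) ^ 2
        + (Y 1 / Real.sqrt ((1 - d ^ 2) / (4 - d ^ 2))) ^ 2 < 1}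
      = fm '' Metric.ball (0 : EuclideanSpace ℝ (Fin 2)) (1/2) := by
    ext Y
    simp only [Set.mem_setOf_eq, Set.mem_image]
    rw [ellipse_iff d hdl hdr (Y 0) (Y 1)]
    constructor
    · intro hQ
      have hpos := one_add_pos d hdl hdr (Y 0) (Y 1) hQ
      set yc : EuclideanSpace ℝ (Fin 2) :=
        (L.symm ![(Y 0 + d)/(1 + d * Y 0), (Y 1 * s)/(1 + d * Y 0)]) with hyc
      have hyc0 : yc 0 = (Y 0 + d)/(1 + d * Y 0) := rfl
      have hyc1 : yc 1 = (Y 1 * s)/(1 + d * Y 0) := rfl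
      have hycball : yc ∈ Metric.ball (0 : EuclideanSpace ℝ (Fin 2)) (1/2) := by
        rw [hball, hyc0, hyc1, div_pow, div_pow, ← add_div, div_lt_iff₀ (by positivity)]
        have hYs : (Y 1 * s)^2 = (1 - d^2) * (Y 1)^2 := by
          rw [mul_pow, hs2]; ring
        rw [hYs]
        nlinarith [hQ]
      refine ⟨yc, hycball, ?_⟩
      have hden : 1 - d * yc 0 = (1 - d^2)/(1 + d * Y 0) := by
        rw [hyc0]; field_simp; ring
      have hpos' : 1 + Y 0 * d ≠ 0 := (by linarith : (0:ℝ) < 1 + Y 0 * d).ne'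
      refine PiLp.ext fun i => ?_
      fin_cases i
      · show fm yc 0 = Y 0
        rw [hfm0, hden, hyc0]
        field_simp
        ring
      · show fm yc 1 = Y 1
        rw [hfm1, hden, hyc1, ← hs2]
        field_simp
    · rintro ⟨y, hy, rfl⟩
      have he := he_ball y hy
      have h14 := (hball y).1 hy
      have he' : 1 - y 0 * d ≠ 0 := (by linarith : (0:ℝ) < 1 - y 0 * d).ne'
      rw [hfm0, hfm1]
      have e1 : (y 0 - d)/(1 - d * y 0) + d = (y 0 * (1 - d^2))/(1 - d * y 0) := by
        field_simp; ring
      have e2 : 1 + d * ((y 0 - d)/(1 - d * y 0)) = (1 - d^2)/(1 - d * y 0) := by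
        field_simp; ring
      rw [e1, e2]
      rw [show ((y 1 * s)/(1 - d * y 0))^2 = ((1 - d^2) * (y 1)^2)/(1 - d * y 0)^2 from by
        rw [div_pow, mul_pow, hs2]; ring]
      rw [div_pow, div_pow]
      rw [show (4:ℝ)*((y 0 * (1 - d^2))^2/(1 - d * y 0)^2)
          + 4*(1 - d^2)*((1 - d^2)*(y 1)^2/(1 - d * y 0)^2)
          = (4*(y 0 * (1 - d^2))^2 + 4*(1 - d^2)*((1 - d^2)*(y 1)^2))/(1 - d * y 0)^2 from by
        ring]
      rw [div_lt_div_iff₀ (by positivity : (0:ℝ) < (1 - d * y 0)^2)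
        (by positivity : (0:ℝ) < (1 - d * y 0)^2)]
      nlinarith [mul_pos (mul_pos (mul_pos hv hv) (mul_pos he he))
        (show (0:ℝ) < 1 - 4*((y 0)^2 + (y 1)^2) by linarith)]
  -- injectivity
  have hinj : Set.InjOn fm (Metric.ball (0 : EuclideanSpace ℝ (Fin 2)) (1/2)) := by
    intro y hy z hz h
    have hye := he_ball y hy
    have hze := he_ball z hz
    have h0 : (y 0 - d)/(1 - d * y 0) = (z 0 - d)/(1 - d * z 0) := by
      rw [← hfm0 y, ← hfm0 z, h]
    have h1 : (y 1 * s)/(1 - d * y 0) = (z 1 * s)/(1 - d * z 0) := by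
      rw [← hfm1 y, ← hfm1 z, h]
    rw [div_eq_div_iff hye.ne' hze.ne'] at h0
    have hy0 : y 0 = z 0 := by
      have hzero : (y 0 - z 0) * (1 - d^2) = 0 := by linear_combination h0
      rcases mul_eq_zero.1 hzero with h' | h'
      · linarith
      · exact absurd h' hv.ne'
    have hy1 : y 1 = z 1 := by
      rw [hy0] at h1
      field_simp [hze.ne'] at h1
      exact h1
    refine PiLp.ext fun i => ?_
    fin_cases i
    · exact hy0
    · exact hy1
  -- main computation
  rw [himg]
  rw [integral_image_eq_integral_abs_det_fderiv_smul volume measurableSet_ball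
    (fun y hy => ((hder y (he_ball y hy).ne').hasFDerivWithinAt)) hinj]
  rw [← integral_const_mul]
  apply setIntegral_congr_fun measurableSet_ball
  intro y hy
  have he := he_ball y hy
  have he' : 1 - y 0 * d ≠ 0 := (by linarith : (0:ℝ) < 1 - y 0 * d).ne'
  have hyn : ‖y‖ < 1/2 := by
    rw [Metric.mem_ball, dist_zero_right] at hy; exact hy
  have h1N : 0 < 1 - ‖y‖^2 := by nlinarith [norm_nonneg y]
  have hρfm : ρ (fm y) = (s^2 * (1 - ‖y‖^2) / (1 - d * y 0)^2) ^ α := by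
    rw [hρ, hnorm2 (fm y), hfm0, hfm1]
    congr 1
    rw [show ((y 1 * s)/(1 - d * y 0))^2 = ((1 - d^2) * (y 1)^2)/(1 - d * y 0)^2 from by
      rw [div_pow, mul_pow, hs2]; ring, hnorm2 y, hs2]
    field_simp
    ring
  have h1add : 1 + d * (fm y 0) = s^2/(1 - d * y 0) := by
    rw [hfm0, hs2]; field_simp; ring
  simp only [smul_eq_mul]
  rw [hdet y, h1add, hρfm, hρ y, hα, ← hs2]
  rw [abs_of_pos (by positivity)]
  rw [show s^2 * s / (1 - d * y 0)^3 = s^3/(1 - d * y 0)^3 from by ring]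
  exact rpow_magic p s (1 - d * y 0) (1 - ‖y‖^2) κ₀ hp1 hs0 he h1N hκpos
end

section
/- Let p\in(1,2). Define g(z) = (1+\sqrt z)^{2/(p-1)} + (1-\sqrt z)^{2/(p-1)} and h(z) = (1-z)^{2/(p-1)} for z\in[0,1), and K^*(z_1,z_2) = g(z_2)h(z_1) - g(z_1)h(z_2). Then there exists \beta_0>0 such that for all z\in[0,99/100], -2g(z)h'(z)+2g'(z)h(z) \ge 2\beta_0; equivalently the directional derivative of K^* at (z,z) in the direction (-1,1) is bounded below by 2\beta_0. -/
theorem stmt_10 (p : ℝ) (hp1 : 1 < p) (hp2 : p < 2)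
    (g hfun : ℝ → ℝ)
    (hg : ∀ z : ℝ, g z = (1 + Real.sqrt z) ^ (2 / (p - 1)) + (1 - Real.sqrt z) ^ (2 / (p - 1)))
    (hh : ∀ z : ℝ, hfun z = (1 - z) ^ (2 / (p - 1))) :
    ∃ β₀ : ℝ, 0 < β₀ ∧
      ∀ z ∈ Set.Icc (0 : ℝ) (99 / 100),
        2 * β₀ ≤ -2 * g z * deriv hfun z + 2 * deriv g z * hfun z := by
  set a : ℝ := 2 / (p - 1) with ha
  have hp0 : 0 < p - 1 := by linarith
  have ha2 : 2 < a := by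
    rw [ha, lt_div_iff₀ hp0]; linarith
  have ha1 : (1 : ℝ) ≤ a := by linarith
  have hgf : g = fun z : ℝ => (1 + Real.sqrt z) ^ a + (1 - Real.sqrt z) ^ a := funext hg
  have hhf : hfun = fun z : ℝ => (1 - z) ^ a := funext hh
  -- derivative of hfun on z < 1
  have hDh : ∀ z : ℝ, z < 1 → HasDerivAt hfun (a * (1 - z) ^ (a - 1) * (-1)) z := by
    intro z hz
    rw [hhf]
    have h1 : HasDerivAt (fun z : ℝ => 1 - z) (-1) z := (hasDerivAt_id z).const_sub 1
    exact (Real.hasDerivAt_rpow_const (Or.inl (by linarith : (1 : ℝ) - z ≠ 0))).comp z h1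
  -- g z ≥ 2 for z ≤ 1
  have hg2 : ∀ z : ℝ, z ≤ 1 → 2 ≤ g z := by
    intro z hz
    rw [hg]
    have hs0 : 0 ≤ Real.sqrt z := Real.sqrt_nonneg z
    have hs1 : Real.sqrt z ≤ 1 := by
      rcases le_or_gt z 0 with h | h
      · simp [Real.sqrt_eq_zero_of_nonpos h]
      · exact Real.sqrt_le_one.mpr hz
    have b1 : 1 + a * Real.sqrt z ≤ (1 + Real.sqrt z) ^ a :=
      one_add_mul_self_le_rpow_one_add (by linarith) ha1
    have b2 : 1 + a * (-Real.sqrt z) ≤ (1 + -Real.sqrt z) ^ a :=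
      one_add_mul_self_le_rpow_one_add (by linarith) ha1
    have : (1 : ℝ) + -Real.sqrt z = 1 - Real.sqrt z := by ring
    rw [this] at b2
    nlinarith
  -- deriv g 0 = 0 (local minimum)
  have hDg0 : deriv g 0 = 0 := by
    have hmin : IsLocalMin g 0 := by
      have hev : ∀ᶠ z in nhds (0 : ℝ), z < 1 := eventually_lt_nhds (by norm_num)
      refine hev.mono fun z hz => ?_
      have : g 0 = 2 := by
        rw [hg]; simp [Real.sqrt_zero, Real.one_rpow]; norm_num
      rw [this]
      exact hg2 z hz.le
    exact hmin.deriv_eq_zero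
  -- deriv g z ≥ 0 for 0 < z ≤ 99/100
  have hDgpos : ∀ z : ℝ, 0 < z → z ≤ 99 / 100 → 0 ≤ deriv g z := by
    intro z hz hz1
    have hsz : 0 < Real.sqrt z := Real.sqrt_pos.mpr hz
    have hsz1 : Real.sqrt z < 1 := by
      rw [show (1 : ℝ) = Real.sqrt 1 by simp]
      exact Real.sqrt_lt_sqrt hz.le (by linarith)
    have hs1 : HasDerivAt (fun z : ℝ => 1 + Real.sqrt z) (1 / (2 * Real.sqrt z)) z :=
      (Real.hasDerivAt_sqrt hz.ne').const_add 1
    have hs2 : HasDerivAt (fun z : ℝ => 1 - Real.sqrt z) (-(1 / (2 * Real.sqrt z))) z :=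
      (Real.hasDerivAt_sqrt hz.ne').const_sub 1
    have hd1 : HasDerivAt (fun z : ℝ => (1 + Real.sqrt z) ^ a)
        (a * (1 + Real.sqrt z) ^ (a - 1) * (1 / (2 * Real.sqrt z))) z :=
      by exact (Real.hasDerivAt_rpow_const (x := 1 + Real.sqrt z) (p := a) (Or.inl (by positivity : (1 : ℝ) + Real.sqrt z ≠ 0))).comp z hs1
    have hd2 : HasDerivAt (fun z : ℝ => (1 - Real.sqrt z) ^ a)
        (a * (1 - Real.sqrt z) ^ (a - 1) * (-(1 / (2 * Real.sqrt z)))) z :=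
      by exact (Real.hasDerivAt_rpow_const (x := 1 - Real.sqrt z) (p := a) (Or.inl (by linarith : (1 : ℝ) - Real.sqrt z ≠ 0))).comp z hs2
    have hdg : HasDerivAt g
        (a * (1 + Real.sqrt z) ^ (a - 1) * (1 / (2 * Real.sqrt z)) +
          a * (1 - Real.sqrt z) ^ (a - 1) * (-(1 / (2 * Real.sqrt z)))) z := by
      rw [hgf]; exact hd1.add hd2
    rw [hdg.deriv]
    have hle : (1 - Real.sqrt z) ^ (a - 1) ≤ (1 + Real.sqrt z) ^ (a - 1) :=
      Real.rpow_le_rpow (by linarith) (by linarith) (by linarith)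
    have h2s : 0 < 1 / (2 * Real.sqrt z) := by positivity
    have key : 0 ≤ a * ((1 + Real.sqrt z) ^ (a - 1) - (1 - Real.sqrt z) ^ (a - 1)) *
        (1 / (2 * Real.sqrt z)) :=
      mul_nonneg (mul_nonneg (by linarith) (sub_nonneg.mpr hle)) h2s.le
    nlinarith [key]
  -- conclusion
  refine ⟨a * (1 / 100 : ℝ) ^ (a - 1), by positivity, ?_⟩
  rintro z ⟨hz0, hz1⟩
  have hz1' : z < 1 := by linarith
  have hdh := (hDh z hz1').deriv
  rw [hdh, hh]
  have hDg : 0 ≤ deriv g z := by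
    rcases eq_or_lt_of_le hz0 with h | h
    · rw [← h, hDg0]
    · exact hDgpos z h hz1
  have hg2' : 2 ≤ g z := hg2 z hz1'.le
  have hterm2 : 0 ≤ 2 * deriv g z * (1 - z) ^ a :=
    mul_nonneg (by positivity) (Real.rpow_nonneg (by linarith) a)
  have hpow : (1 / 100 : ℝ) ^ (a - 1) ≤ (1 - z) ^ (a - 1) :=
    Real.rpow_le_rpow (by norm_num) (by linarith) (by linarith)
  have hpowpos : (0 : ℝ) < (1 / 100 : ℝ) ^ (a - 1) := by positivity
  have hpownn : (0:ℝ) ≤ (1 - z) ^ (a - 1) := Real.rpow_nonneg (by linarith) (a - 1)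
  have h1 : 2 * (a * (1 / 100 : ℝ) ^ (a - 1)) ≤ 2 * (a * (1 - z) ^ (a - 1)) := by
    have := mul_le_mul_of_nonneg_left hpow (by linarith : (0:ℝ) ≤ a)
    linarith
  have h2 : 2 * (a * (1 - z) ^ (a - 1)) ≤ g z * (a * (1 - z) ^ (a - 1)) :=
    mul_le_mul_of_nonneg_right hg2' (mul_nonneg (by linarith) hpownn)
  nlinarith [h1, h2, hterm2]
end

section
/- Let p>1, |d|<1, \nu>-1+|d|, and \lambda = \lambda(|d|,\nu) = ((1-|d|^2)/((1+\nu)^2-|d|^2))^{1/(p-1)}. Define F(\lambda,\nu,d) = \frac{p+1}{p-1}\lambda^2 - \frac{2}{p-1}\lambda^{p+1} + \frac{2}{p-1}\frac{\nu^2}{1-|d|^2}\lambda^{p+1}. Then F \le 1, i.e. E(\kappa^*(d,\nu)) = E(\kappa_0,0)\,F \le E(\kappa_0,0) when E(\kappa_0,0)>0. In particular, for all \lambda\ge 0 and all \nu,d, \frac{p+1}{p-1}\lambda^2 - \frac{2}{p-1}\lambda^{p+1}(1 - \frac{\nu^2}{1-|d|^2}) \le 1 whenever \lambda^{p-1}(1+\nu/(1-|d|))(1+\nu/(1+|d|))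 = 1. -/
theorem stmt_14 (p d ν lam : ℝ) (hp : 1 < p) (hd : d ∈ Set.Ioo (-1 : ℝ) 1)
    (hν : -1 + |d| < ν) (hlam : 0 < lam)
    (hrel : lam ^ (p - 1) = (1 - d ^ 2) / ((1 + ν) ^ 2 - d ^ 2)) :
    ((p + 1) / (p - 1)) * lam ^ 2 - (2 / (p - 1)) * lam ^ (p + 1)
        + (2 / (p - 1)) * (ν ^ 2 / (1 - d ^ 2)) * lam ^ (p + 1) ≤ 1 := by
  obtain ⟨hd1, hd2⟩ := hd
  have habs : |d| < 1 := abs_lt.2 ⟨hd1, hd2⟩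
  have hdsq : d ^ 2 < 1 := by nlinarith [sq_abs d, abs_nonneg d]
  have he : (0:ℝ) < 1 - d ^ 2 := by linarith
  have hM0 : |d| < 1 + ν := by linarith
  have hMpos : (0:ℝ) < 1 + ν := lt_of_le_of_lt (abs_nonneg d) hM0
  have hD : (0:ℝ) < (1 + ν) ^ 2 - d ^ 2 := by nlinarith [sq_abs d, abs_nonneg d]
  have hq0 : (0:ℝ) < p - 1 := by linarith
  have hp3 : (0:ℝ) < p + 3 := by linarith
  set L : ℝ := lam ^ ((p - 1) / 2) with hLdef
  have hLpos : 0 < L := Real.rpow_pos_of_pos hlam _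
  have hL2 : L ^ 2 = lam ^ (p - 1) := by
    rw [hLdef, ← Real.rpow_natCast (lam ^ ((p - 1) / 2)) 2, ← Real.rpow_mul hlam.le]
    norm_num
  have hsplit : lam ^ (p + 1) = lam ^ 2 * L ^ 2 := by
    rw [hL2, ← Real.rpow_natCast lam 2, ← Real.rpow_add hlam]
    norm_num
    congr 1
    ring
  have hDL : ((1 + ν) ^ 2 - d ^ 2) * L ^ 2 = 1 - d ^ 2 := by
    rw [hL2, hrel]; field_simp
  -- Cauchy-Schwarz type bound : (1+ν)·L² ≥ d²L² + (1-d²)L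
  have hprod : ((1+ν)*L^2 - (d^2*L^2 + (1-d^2)*L)) * ((1+ν)*L^2 + (d^2*L^2 + (1-d^2)*L))
      = L^2 * (d^2 * (1-d^2) * (L-1)^2) := by
    linear_combination L^2 * hDL
  have hY : (0:ℝ) < (1+ν)*L^2 + (d^2*L^2 + (1-d^2)*L) := by positivity
  have hXY : (0:ℝ) ≤ ((1+ν)*L^2 - (d^2*L^2 + (1-d^2)*L)) * ((1+ν)*L^2 + (d^2*L^2 + (1-d^2)*L)) := by
    rw [hprod]; positivity
  have hMge : (0:ℝ) ≤ (1+ν)*L^2 - (d^2*L^2 + (1-d^2)*L) := by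
    nlinarith [hXY, hY]
  -- weighted AM-GM : (p-1) + 4·lam²·L ≥ (p+3)·lam²
  have hpow : lam ^ ((p+3)/2) = lam ^ 2 * L := by
    rw [hLdef, ← Real.rpow_natCast lam 2, ← Real.rpow_add hlam]
    congr 1
    push_cast
    ring
  have hgm := Real.geom_mean_le_arith_mean2_weighted
    (w₁ := (p-1)/(p+3)) (w₂ := 4/(p+3)) (p₁ := 1) (p₂ := lam ^ ((p+3)/2))
    (by positivity) (by positivity) zero_le_one (by positivity)
    (by rw [← add_div, div_eq_one_iff_eq hp3.ne']; ring)
  have hgm' : lam ^ 2 ≤ (p-1)/(p+3) + 4/(p+3) * (lam ^ 2 * L) := by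
    rw [← hpow]
    calc lam ^ 2 = (1:ℝ) ^ ((p-1)/(p+3)) * (lam ^ ((p+3)/2)) ^ ((4:ℝ)/(p+3)) := by
          rw [Real.one_rpow, one_mul, ← Real.rpow_natCast lam 2, ← Real.rpow_mul hlam.le]
          congr 1
          field_simp
          ring
      _ ≤ (p-1)/(p+3) * 1 + 4/(p+3) * lam ^ ((p+3)/2) := hgm
      _ = (p-1)/(p+3) + 4/(p+3) * lam ^ ((p+3)/2) := by ring
  have hamgm : (p + 3) * lam ^ 2 ≤ (p - 1) + 4 * (lam ^ 2 * L) := by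
    have h3 : (p+3) * ((p-1)/(p+3) + 4/(p+3) * (lam^2*L)) = (p-1) + 4*(lam^2*L) := by
      field_simp
    linarith [mul_le_mul_of_nonneg_left hgm' hp3.le]
  -- combine
  have ha : (0:ℝ) ≤ lam ^ 2 := sq_nonneg lam
  have h4 : 4*lam^2*(d^2*L^2 + (1-d^2)*L) ≤ 4*lam^2*((1+ν)*L^2) :=
    mul_le_mul_of_nonneg_left (sub_nonneg.mp hMge) (by positivity)
  have hDLa : lam^2 * (((1+ν)^2 - d^2) * L^2) = lam^2 * (1 - d^2) := by rw [hDL]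
  have hamgm_e : (p+3) * lam^2 * (1-d^2) ≤ ((p-1) + 4*(lam^2*L)) * (1-d^2) :=
    mul_le_mul_of_nonneg_right hamgm he.le
  have e2 : lam^2 * (((p-1)*((1+ν)^2 - d^2) + 4*ν*(1+ν)) * L^2)
      = (p-1)*(lam^2*(1-d^2)) + 4*(lam^2*(1-d^2)) + 4*lam^2*(d^2*L^2)
        - 4*lam^2*((1+ν)*L^2) := by
    linear_combination (p+3) * hDLa
  have e3 : (p-1)*((1+ν)^2 - d^2) * L^2 = (p-1)*(1-d^2) := by
    linear_combination (p-1) * hDL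
  have hstar : lam^2 * (((p-1)*((1+ν)^2 - d^2) + 4*ν*(1+ν)) * L^2)
      ≤ (p-1)*((1+ν)^2 - d^2) * L^2 := by
    rw [e2, e3]
    linarith [h4, hamgm_e]
  have hL2pos : (0:ℝ) < L^2 := by positivity
  have hstar2 : lam^2 * ((p-1)*((1+ν)^2 - d^2) + 4*ν*(1+ν)) ≤ (p-1)*((1+ν)^2 - d^2) := by
    have h5 : (lam^2 * ((p-1)*((1+ν)^2 - d^2) + 4*ν*(1+ν))) * L^2
        ≤ ((p-1)*((1+ν)^2 - d^2)) * L^2 := by linarith [hstar]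
    exact le_of_mul_le_mul_right h5 hL2pos
  rw [hsplit, hL2, hrel, ← sub_nonneg]
  have key : 1 - (((p + 1) / (p - 1)) * lam ^ 2
        - (2 / (p - 1)) * (lam ^ 2 * ((1 - d ^ 2) / ((1 + ν) ^ 2 - d ^ 2)))
        + (2 / (p - 1)) * (ν ^ 2 / (1 - d ^ 2)) * (lam ^ 2 * ((1 - d ^ 2) / ((1 + ν) ^ 2 - d ^ 2))))
      = ((p-1)*((1+ν)^2 - d^2) - lam^2 * ((p-1)*((1+ν)^2 - d^2) + 4*ν*(1+ν)))
        / ((p-1)*((1+ν)^2 - d^2)) := by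
    field_simp
    ring
  rw [key]
  exact div_nonneg (by linarith) (by positivity)
end
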